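/- In Case b), for every ν = (ν^X,ν^Y) ∈ (ℝ^m)² with ν^X_i = ν^Y_i = 0 for all i ∉ I, the supremum over x ∈ E'×E' of Σ_{i=1}^m min(p^X_i x^X_i + ν^X_i, p^Y_i x^Y_i + ν^Y_i) is attained (so 𝔪(ν) is well defined), and 𝔪(ν) equals the maximum of the same expression restricted to x ∈ E'×E' with ‖x‖_∞ ≤ 2Cm‖ν‖_∞, where C > 0 is a constant depending only on p^X and p^Y (the constant of the projection lemma). -/

import Mathlib

open MeasureTheory ProbabilityTheory Filter Finset Topology

noncomputable section

attribute [local instance] Classical.propDecidable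

/-- The simplex `Λ` of probability vectors on `{1,…,m}`. -/
def Lam (m : ℕ) : Set (Fin m → ℝ) := {l | (∀ i, 0 ≤ l i) ∧ ∑ i, l i = 1}

/-- `f(λ^X, λ^Y) = Σ_i min (p^X_i λ^X_i) (p^Y_i λ^Y_i)`. -/
def fobj {m : ℕ} (pX pY : Fin m → ℝ) (l : (Fin m → ℝ) × (Fin m → ℝ)) : ℝ :=
  ∑ i, min (pX i * l.1 i) (pY i * l.2 i)

/-- `e_max`, the maximum of `f` over `Λ²`. -/
def emax {m : ℕ} (pX pY : Fin m → ℝ) : ℝ :=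
  sSup (fobj pX pY '' (Lam m ×ˢ Lam m))

/-- The set `U`. -/
def Uset {m : ℕ} (pX pY : Fin m → ℝ) : Set (Fin m → ℝ) :=
  {u | (∀ i, 0 ≤ u i) ∧ (∑ i, u i / pX i) ≤ 1 ∧ (∑ i, u i / pY i) ≤ 1}

/-- The set `L_U` of maximizers of `φ(u) = Σ_i u_i` over `U`. -/
def LU {m : ℕ} (pX pY : Fin m → ℝ) : Set (Fin m → ℝ) :=
  {u ∈ Uset pX pY | ∑ i, u i = emax pX pY}

/-- The set `I` of letters usable in a maximizer. -/
def Iset {m : ℕ} (pX pY : Fin m → ℝ) : Set (Fin m) :=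
  {i | ∃ u ∈ LU pX pY, 0 < u i}

/-- Case a): some maximizer saturates the `X` constraint but not the `Y` one. -/
def CaseA {m : ℕ} (pX pY : Fin m → ℝ) : Prop :=
  ∃ u ∈ LU pX pY, (∑ i, u i / pX i) = 1 ∧ (∑ i, u i / pY i) < 1

/-- Case b): every maximizer saturates both constraints. -/
def CaseB {m : ℕ} (pX pY : Fin m → ℝ) : Prop :=
  ∀ u ∈ LU pX pY, (∑ i, u i / pX i) = 1 ∧ (∑ i, u i / pY i) = 1

/-- Case b1): Case b) and the vectors `(1/p^X_i)_{i∈I}` and `(1/p^Y_i)_{i∈I}` coincide. -/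
def CaseB1 {m : ℕ} (pX pY : Fin m → ℝ) : Prop :=
  CaseB pX pY ∧ ∀ i ∈ Iset pX pY, (pX i)⁻¹ = (pY i)⁻¹

/-- Case b2): Case b) and the vectors `(1/p^X_i)_{i∈I}` and `(1/p^Y_i)_{i∈I}` differ. -/
def CaseB2 {m : ℕ} (pX pY : Fin m → ℝ) : Prop :=
  CaseB pX pY ∧ ¬ (∀ i ∈ Iset pX pY, (pX i)⁻¹ = (pY i)⁻¹)

/-- The set `K_{Λ²}` of maximizers of `f` over `Λ²`. -/
def Kset {m : ℕ} (pX pY : Fin m → ℝ) : Set ((Fin m → ℝ) × (Fin m → ℝ)) :=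
  {l ∈ Lam m ×ˢ Lam m | fobj pX pY l = emax pX pY}

/-- `p^X_max`. -/
def pXmax {m : ℕ} (pX : Fin m → ℝ) : ℝ := ⨆ i, pX i

/-- The set `J` (Case a)). -/
def Jset {m : ℕ} (pX pY : Fin m → ℝ) : Set (Fin m → ℝ) :=
  {l ∈ Lam m | (∀ i ∉ Iset pX pY, l i = 0) ∧
    (∑ i ∈ Finset.univ.filter (· ∈ Iset pX pY), l i / pY i) ≤ 1 / pXmax pX}

/-- `E = {x : Σ_i x_i = 0}`. -/
def Eset (m : ℕ) : Set (Fin m → ℝ) := {x | ∑ i, x i = 0}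

/-- `E' = {x ∈ E : x_i ≥ 0 for i ∉ I}`. -/
def E'set {m : ℕ} (pX pY : Fin m → ℝ) : Set (Fin m → ℝ) :=
  {x ∈ Eset m | ∀ i ∉ Iset pX pY, 0 ≤ x i}

/-- The function `𝔪` of Lemma 1.4. -/
def mfrak {m : ℕ} (pX pY : Fin m → ℝ) (ν : (Fin m → ℝ) × (Fin m → ℝ)) : ℝ :=
  sSup ((fun x : (Fin m → ℝ) × (Fin m → ℝ) =>
      ∑ i, min (pX i * x.1 i + ν.1 i) (pY i * x.2 i + ν.2 i)) ''
    (E'set pX pY ×ˢ E'set pX pY))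

/-- Partial sum `λ_1 + … + λ_i`. -/
def psumLe {m : ℕ} (l : Fin m → ℝ) (i : Fin m) : ℝ :=
  ∑ j ∈ Finset.univ.filter (· ≤ i), l j

/-- Partial sum `λ_1 + … + λ_{i-1}`. -/
def psumLt {m : ℕ} (l : Fin m → ℝ) (i : Fin m) : ℝ :=
  ∑ j ∈ Finset.univ.filter (· < i), l j

/-- `e(i,j)`. -/
def eij {m : ℕ} (pX pY : Fin m → ℝ) (i j : Fin m) : ℝ :=
  (pX i * pY i * (pX j - pY j) + pX j * pY j * (pY i - pX i)) /
    (pY i * pX j - pX i * pY j)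

/-- The set `S` of admissible pairs `(i,j)` in the representation of `e_max`. -/
def Sset {m : ℕ} (pX pY : Fin m → ℝ) : Set (Fin m × Fin m) :=
  {ij | pX ij.1 < pX ij.2 ∧ pY ij.2 < pY ij.1 ∧ pX ij.1 < pY ij.1 ∧ pY ij.2 < pX ij.2}

/-- `e_1 = max_i min(p^X_i, p^Y_i)`. -/
def e1 {m : ℕ} (pX pY : Fin m → ℝ) : ℝ := ⨆ i, min (pX i) (pY i)

/-- `e_2 = max_{(i,j)∈S} e(i,j)` (with `sSup ∅ = 0` when `S` is empty). -/
def e2 {m : ℕ} (pX pY : Fin m → ℝ) : ℝ :=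
  sSup ((fun ij : Fin m × Fin m => eij pX pY ij.1 ij.2) '' Sset pX pY)


section Part1

variable {m : ℕ} {pX pY : Fin m → ℝ}

lemma sum_ite_div (c : ℝ) (j : Fin m) (f : Fin m → ℝ) :
    ∑ i, (if i = j then c else 0) / f i = c / f j := by
  have h : ∀ i ∈ Finset.univ, (if i = j then c else 0) / f i = if i = j then c / f j else 0 := by
    intro i _
    split_ifs with h
    · rw [h]
    · exact zero_div _
  rw [Finset.sum_congr rfl h]
  simp

lemma sum_ite_id (c : ℝ) (j : Fin m) :
    ∑ i, (if i = j then c else 0) = c := by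
  simpa using sum_ite_div c j (fun _ => 1)

lemma Uset_compact (hpX : ∀ i, 0 < pX i) : IsCompact (Uset pX pY) := by
  have hclosed : IsClosed (Uset pX pY) := by
    have : Uset pX pY = (⋂ i, {u : Fin m → ℝ | 0 ≤ u i}) ∩
        ({u : Fin m → ℝ | ∑ i, u i / pX i ≤ 1} ∩ {u : Fin m → ℝ | ∑ i, u i / pY i ≤ 1}) := by
      ext u; simp [Uset, Set.mem_iInter, and_assoc]
    rw [this]
    refine IsClosed.inter (isClosed_iInter fun i => ?_) (IsClosed.inter ?_ ?_)
    · exact isClosed_le continuous_const (continuous_apply i)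
    · exact isClosed_le (continuous_finset_sum _ fun i _ => (continuous_apply i).div_const _)
        continuous_const
    · exact isClosed_le (continuous_finset_sum _ fun i _ => (continuous_apply i).div_const _)
        continuous_const
  refine IsCompact.of_isClosed_subset (isCompact_univ_pi fun i => isCompact_Icc
    (a := (0:ℝ)) (b := pX i)) hclosed ?_
  intro u hu
  rw [Set.mem_univ_pi]
  intro i
  refine ⟨hu.1 i, ?_⟩
  have h1 : u i / pX i ≤ 1 := by
    refine le_trans ?_ hu.2.1
    refine Finset.single_le_sum (f := fun j => u j / pX j) ?_ (Finset.mem_univ i)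
    intro j _; exact div_nonneg (hu.1 j) (hpX j).le
  calc u i = (u i / pX i) * pX i := (div_mul_cancel₀ (u i) (hpX i).ne').symm
  _ ≤ 1 * pX i := mul_le_mul_of_nonneg_right h1 (hpX i).le
  _ = pX i := one_mul _

lemma exists_LU_max (hm : 0 < m) (hpX : ∀ i, 0 < pX i) (hpY : ∀ i, 0 < pY i) :
    ∃ uh ∈ LU pX pY, (∀ u ∈ Uset pX pY, ∑ i, u i ≤ ∑ i, uh i) ∧ 0 < ∑ i, uh i := by
  have hU0 : (0 : Fin m → ℝ) ∈ Uset pX pY := by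
    refine ⟨fun i => le_rfl, ?_, ?_⟩ <;> simp
  obtain ⟨uh, hUuh, hmax⟩ := (Uset_compact (pY := pY) hpX).exists_isMaxOn ⟨0, hU0⟩
    ((continuous_finset_sum _ fun i _ => continuous_apply i).continuousOn)
  have hmax' : ∀ u ∈ Uset pX pY, ∑ i, u i ≤ ∑ i, uh i := fun u hu => hmax hu
  -- fobj is at most ∑ uh on Λ²
  have key1 : ∀ l ∈ Lam m ×ˢ Lam m, fobj pX pY l ≤ ∑ i, uh i := by
    intro l hl
    set u : Fin m → ℝ := fun i => min (pX i * l.1 i) (pY i * l.2 i) with hu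
    have huU : u ∈ Uset pX pY := by
      refine ⟨fun i => le_min (mul_nonneg (hpX i).le (hl.1.1 i)) (mul_nonneg (hpY i).le (hl.2.1 i)), ?_, ?_⟩
      · calc ∑ i, u i / pX i ≤ ∑ i, l.1 i := by
              refine Finset.sum_le_sum fun i _ => ?_
              rw [div_le_iff₀ (hpX i)]
              calc u i ≤ pX i * l.1 i := min_le_left _ _
              _ = l.1 i * pX i := mul_comm _ _
            _ = 1 := hl.1.2
      · calc ∑ i, u i / pY i ≤ ∑ i, l.2 i := by
              refine Finset.sum_le_sum fun i _ => ?_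
              rw [div_le_iff₀ (hpY i)]
              calc u i ≤ pY i * l.2 i := min_le_right _ _
              _ = l.2 i * pY i := mul_comm _ _
            _ = 1 := hl.2.2
    exact hmax' u huU
  -- construct a λ realizing ∑ uh
  set i0 : Fin m := ⟨0, hm⟩ with hi0
  set lX : Fin m → ℝ := fun i => uh i / pX i + (if i = i0 then 1 - ∑ j, uh j / pX j else 0) with hlX
  set lY : Fin m → ℝ := fun i => uh i / pY i + (if i = i0 then 1 - ∑ j, uh j / pY j else 0) with hlY
  have hlXL : lX ∈ Lam m := by
    constructor
    · intro i
      refine add_nonneg (div_nonneg (hUuh.1 i) (hpX i).le) ?_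
      split_ifs
      · linarith [hUuh.2.1]
      · exact le_rfl
    · simp only [hlX]
      rw [Finset.sum_add_distrib, sum_ite_id (1 - ∑ j, uh j / pX j) i0]
      ring
  have hlYL : lY ∈ Lam m := by
    constructor
    · intro i
      refine add_nonneg (div_nonneg (hUuh.1 i) (hpY i).le) ?_
      split_ifs
      · linarith [hUuh.2.2]
      · exact le_rfl
    · simp only [hlY]
      rw [Finset.sum_add_distrib, sum_ite_id (1 - ∑ j, uh j / pY j) i0]
      ring
  have hge : ∑ i, uh i ≤ fobj pX pY (lX, lY) := by
    refine Finset.sum_le_sum fun i _ => ?_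
    have h1 : uh i ≤ pX i * lX i := by
      rw [hlX]
      have : pX i * (uh i / pX i) = uh i := by
        rw [mul_comm]; exact div_mul_cancel₀ (uh i) (hpX i).ne'
      calc uh i = pX i * (uh i / pX i) := this.symm
      _ ≤ pX i * (uh i / pX i + _) := by
            refine mul_le_mul_of_nonneg_left ?_ (hpX i).le
            refine le_add_of_nonneg_right ?_
            split_ifs
            · linarith [hUuh.2.1]
            · exact le_rfl
    have h2 : uh i ≤ pY i * lY i := by
      rw [hlY]
      have : pY i * (uh i / pY i) = uh i := by
        rw [mul_comm]; exact div_mul_cancel₀ (uh i) (hpY i).ne'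
      calc uh i = pY i * (uh i / pY i) := this.symm
      _ ≤ pY i * (uh i / pY i + _) := by
            refine mul_le_mul_of_nonneg_left ?_ (hpY i).le
            refine le_add_of_nonneg_right ?_
            split_ifs
            · linarith [hUuh.2.2]
            · exact le_rfl
    exact le_min h1 h2
  have hfl : fobj pX pY (lX, lY) = ∑ i, uh i :=
    le_antisymm (key1 _ ⟨hlXL, hlYL⟩) hge
  have hemax : emax pX pY = ∑ i, uh i := by
    refine IsGreatest.csSup_eq ⟨⟨(lX, lY), ⟨hlXL, hlYL⟩, hfl⟩, ?_⟩
    rintro y ⟨l, hl, rfl⟩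
    exact key1 l hl
  have hpos : 0 < ∑ i, uh i := by
    have hmpos : (0:ℝ) < m := by exact_mod_cast hm
    set u0 : Fin m → ℝ := fun i => min (pX i) (pY i) / m with hu0
    have hu0U : u0 ∈ Uset pX pY := by
      refine ⟨fun i => div_nonneg (le_min (hpX i).le (hpY i).le) hmpos.le, ?_, ?_⟩
      · calc ∑ i, u0 i / pX i ≤ ∑ _i : Fin m, 1 / (m:ℝ) := by
              refine Finset.sum_le_sum fun i _ => ?_
              rw [hu0, div_div, div_le_div_iff₀ (mul_pos hmpos (hpX i)) hmpos]
              calc min (pX i) (pY i) * (m:ℝ) ≤ pX i * m :=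
                    mul_le_mul_of_nonneg_right (min_le_left _ _) hmpos.le
              _ = 1 * ((m:ℝ) * pX i) := by ring
            _ = 1 := by
              rw [Finset.sum_const, Finset.card_univ, Fintype.card_fin, nsmul_eq_mul]
              field_simp
      · calc ∑ i, u0 i / pY i ≤ ∑ _i : Fin m, 1 / (m:ℝ) := by
              refine Finset.sum_le_sum fun i _ => ?_
              rw [hu0, div_div, div_le_div_iff₀ (mul_pos hmpos (hpY i)) hmpos]
              calc min (pX i) (pY i) * (m:ℝ) ≤ pY i * m :=
                    mul_le_mul_of_nonneg_right (min_le_right _ _) hmpos.le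
              _ = 1 * ((m:ℝ) * pY i) := by ring
            _ = 1 := by
              rw [Finset.sum_const, Finset.card_univ, Fintype.card_fin, nsmul_eq_mul]
              field_simp
    have : 0 < ∑ i, u0 i := by
      refine Finset.sum_pos (fun i _ => div_pos (lt_min (hpX i) (hpY i)) hmpos) ⟨i0, Finset.mem_univ _⟩
    exact lt_of_lt_of_le this (hmax' u0 hu0U)
  exact ⟨uh, ⟨hUuh, hemax.symm⟩, hmax', hpos⟩

end Part1

section Part2

variable {m : ℕ} {pX pY : Fin m → ℝ}

lemma exists_ustar (hm : 0 < m) (hpX : ∀ i, 0 < pX i) (hpY : ∀ i, 0 < pY i) :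
    ∃ us ∈ LU pX pY, (∀ i ∈ Iset pX pY, 0 < us i) ∧ (Iset pX pY).Nonempty := by
  classical
  obtain ⟨uh, hLUuh, hmax, hpos⟩ := exists_LU_max hm hpX hpY
  -- I is nonempty
  have hInonempty : (Iset pX pY).Nonempty := by
    by_contra h
    rw [Set.not_nonempty_iff_eq_empty] at h
    have : ∀ i, uh i ≤ 0 := by
      intro i
      by_contra hc
      push_neg at hc
      have : i ∈ Iset pX pY := ⟨uh, hLUuh, hc⟩
      rw [h] at this
      exact this
    have : ∑ i, uh i ≤ 0 := Finset.sum_nonpos fun i _ => this i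
    linarith
  set F : Finset (Fin m) := Finset.univ.filter (· ∈ Iset pX pY) with hF
  have hFne : F.Nonempty := by
    obtain ⟨i, hi⟩ := hInonempty
    exact ⟨i, by simp [hF, hi]⟩
  have hcard : (0:ℝ) < F.card := by exact_mod_cast Finset.card_pos.2 hFne
  have Hsel : ∀ i : Fin m, ∃ u, u ∈ LU pX pY ∧ (i ∈ Iset pX pY → 0 < u i) := by
    intro i
    by_cases h : i ∈ Iset pX pY
    · obtain ⟨u, hu, hpos⟩ := h
      exact ⟨u, hu, fun _ => hpos⟩
    · exact ⟨uh, hLUuh, fun hc => absurd hc h⟩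
  choose f hf1 hf2 using Hsel
  set us : Fin m → ℝ := fun j => (∑ i ∈ F, f i j) / F.card with hus
  have husU : us ∈ Uset pX pY := by
    refine ⟨fun j => div_nonneg (Finset.sum_nonneg fun i _ => (hf1 i).1.1 j) hcard.le, ?_, ?_⟩
    · have hrw : ∀ j, us j / pX j = (∑ i ∈ F, f i j / pX j) / F.card := by
        intro j
        rw [hus]
        simp only
        rw [div_right_comm, Finset.sum_div]
      calc ∑ j, us j / pX j = ∑ j, (∑ i ∈ F, f i j / pX j) / F.card := by
            exact Finset.sum_congr rfl fun j _ => hrw j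
      _ = (∑ i ∈ F, ∑ j, f i j / pX j) / F.card := by
            rw [← Finset.sum_div, Finset.sum_comm]
      _ ≤ (∑ _i ∈ F, (1:ℝ)) / F.card := by
            gcongr with i hi
            exact (hf1 i).1.2.1
      _ = 1 := by rw [Finset.sum_const, nsmul_eq_mul]; field_simp
    · have hrw : ∀ j, us j / pY j = (∑ i ∈ F, f i j / pY j) / F.card := by
        intro j
        rw [hus]
        simp only
        rw [div_right_comm, Finset.sum_div]
      calc ∑ j, us j / pY j = ∑ j, (∑ i ∈ F, f i j / pY j) / F.card := by
            exact Finset.sum_congr rfl fun j _ => hrw j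
      _ = (∑ i ∈ F, ∑ j, f i j / pY j) / F.card := by
            rw [← Finset.sum_div, Finset.sum_comm]
      _ ≤ (∑ _i ∈ F, (1:ℝ)) / F.card := by
            gcongr with i hi
            exact (hf1 i).1.2.2
      _ = 1 := by rw [Finset.sum_const, nsmul_eq_mul]; field_simp
  have husLU : us ∈ LU pX pY := by
    refine ⟨husU, ?_⟩
    calc ∑ j, us j = (∑ i ∈ F, ∑ j, f i j) / F.card := by
          rw [hus]
          simp only
          rw [← Finset.sum_div, Finset.sum_comm]
    _ = (∑ _i ∈ F, emax pX pY) / F.card := by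
          rw [Finset.sum_congr rfl fun i _ => (hf1 i).2]
    _ = emax pX pY := by rw [Finset.sum_const, nsmul_eq_mul]; field_simp
  refine ⟨us, husLU, ?_, hInonempty⟩
  intro i0 hi0
  have hi0F : i0 ∈ F := by simp [hF, hi0]
  have h1 : f i0 i0 ≤ ∑ i ∈ F, f i i0 :=
    Finset.single_le_sum (fun i _ => (hf1 i).1.1 i0) hi0F
  have h2 : 0 < f i0 i0 := hf2 i0 hi0
  rw [hus]
  simp only
  exact div_pos (lt_of_lt_of_le h2 h1) hcard

end Part2

section Part3

variable {m : ℕ} {pX pY : Fin m → ℝ}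

lemma convex_combo {qj qk : ℝ} (h1 : qj ≤ 1) (h2 : 1 ≤ qk) :
    ∃ t : ℝ, 0 ≤ t ∧ t ≤ 1 ∧ t * qj + (1 - t) * qk = 1 := by
  by_cases hc : qk ≤ qj
  · refine ⟨0, le_rfl, zero_le_one, ?_⟩
    have h3 : qk = 1 := le_antisymm (le_trans hc h1) h2
    rw [h3]; ring
  · push_neg at hc
    have hne : qk - qj ≠ 0 := ne_of_gt (by linarith)
    refine ⟨(qk - 1) / (qk - qj), div_nonneg (by linarith) (by linarith), ?_, ?_⟩
    · rw [div_le_one (by linarith)]; linarith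
    · field_simp
      ring

lemma exists_dual (hm : 0 < m) (hpX : ∀ i, 0 < pX i) (hpY : ∀ i, 0 < pY i)
    (hCaseB : CaseB pX pY) :
    ∃ a b : ℝ, 0 ≤ a ∧ 0 ≤ b ∧ (∀ i, 1 ≤ a / pX i + b / pY i) ∧
      (∀ i ∈ Iset pX pY, a / pX i + b / pY i = 1) := by
  classical
  have H : (Finset.univ : Finset (Fin m)).Nonempty := ⟨⟨0, hm⟩, Finset.mem_univ _⟩
  set v : ℝ → Fin m → ℝ := fun a j => pY j * (1 - a / pX j) with hv
  set B : ℝ → ℝ := fun a => max 0 (Finset.univ.sup' H (v a)) with hB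
  set φ : ℝ → ℝ := fun a => a + B a with hφ
  have hBcont : Continuous B := by
    refine Continuous.max continuous_const ?_
    exact Continuous.finset_sup'_apply H fun j _ =>
      continuous_const.mul (continuous_const.sub ((continuous_id.div_const _)))
  have hBge : ∀ a j, v a j ≤ B a := fun a j =>
    le_trans (Finset.le_sup' (v a) (Finset.mem_univ j)) (le_max_right _ _)
  have hB0 : ∀ a, 0 ≤ B a := fun a => le_max_left _ _
  have hBlt : ∀ a c, 0 < c → (∀ j, v a j < c) → B a < c := fun a c hc h =>
    max_lt hc ((Finset.sup'_lt_iff H).2 fun j _ => h j)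
  set pXm : ℝ := Finset.univ.sup' H pX with hpXmdef
  have hpXm : ∀ i, pX i ≤ pXm := fun i => Finset.le_sup' pX (Finset.mem_univ i)
  have hpXm0 : (0:ℝ) ≤ pXm := le_trans (hpX ⟨0, hm⟩).le (hpXm _)
  obtain ⟨α, hαmem, hαmin'⟩ := isCompact_Icc.exists_isMinOn
    (⟨0, Set.mem_Icc.2 ⟨le_rfl, hpXm0⟩⟩ : (Set.Icc (0:ℝ) pXm).Nonempty)
    ((continuous_id.add hBcont).continuousOn)
  have hαmin : ∀ x ∈ Set.Icc (0:ℝ) pXm, φ α ≤ φ x := fun x hx => hαmin' hx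
  have hα0 : 0 ≤ α := hαmem.1
  have hglob : ∀ a, 0 ≤ a → φ α ≤ φ a := by
    intro a ha
    by_cases hle : a ≤ pXm
    · exact hαmin a ⟨ha, hle⟩
    · push_neg at hle
      have h1 : B pXm = 0 := by
        refine le_antisymm (max_le le_rfl (Finset.sup'_le H _ fun j _ => ?_)) (hB0 _)
        have : pX j ≤ pXm := hpXm j
        have h2 : 1 ≤ pXm / pX j := (one_le_div (hpX j)).2 this
        exact mul_nonpos_of_nonneg_of_nonpos (hpY j).le (by linarith)
      have h2 : φ α ≤ φ pXm := hαmin pXm ⟨hpXm0, le_rfl⟩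
      have h3 : φ pXm = pXm := by rw [hφ]; simp only; rw [h1]; ring
      have h4 : pXm < φ a := by
        rw [hφ]; simp only
        have := hB0 a
        linarith
      linarith
  set β : ℝ := B α with hβdef
  have hβ0 : 0 ≤ β := hB0 α
  have hvle : ∀ j, v α j ≤ β := hBge α
  have hvrep : ∀ a i, v a i = pY i - a * (pY i / pX i) := by
    intro a i
    rw [hv]
    simp only
    field_simp
  have hfeas : ∀ i, 1 ≤ α / pX i + β / pY i := by
    intro i
    have h := hvle i
    rw [hv] at h
    simp only at h
    have h2 : 1 - α / pX i ≤ β / pY i := by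
      rw [le_div_iff₀ (hpY i)]
      linarith [h, mul_comm (pY i) (1 - α / pX i)]
    linarith
  have hq : ∀ j, (0:ℝ) < pY j / pX j := fun j => div_pos (hpY j) (hpX j)
  have hval : ∀ (e : ℝ) j, v (α + e) j = v α j - e * (pY j / pX j) := by
    intro e j
    rw [hvrep, hvrep]
    ring
  have hvalm : ∀ (e : ℝ) j, v (α - e) j = v α j + e * (pY j / pX j) := by
    intro e j
    rw [hvrep, hvrep]
    ring
  -- right optimality
  have rightopt : 0 < β → ∃ j, v α j = β ∧ pY j ≤ pX j := by
    intro hβpos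
    by_contra hcon
    push_neg at hcon
    set ε : ℝ := min β (Finset.univ.inf' H fun j => if v α j = β then β else β - v α j) / 2
      with hε
    have hεpos : 0 < ε := by
      rw [hε]
      refine div_pos (lt_min hβpos ?_) two_pos
      rw [Finset.lt_inf'_iff]
      intro j _
      split_ifs with hj
      · exact hβpos
      · exact sub_pos.2 (lt_of_le_of_ne (hvle j) hj)
    have hεβ : ε ≤ β / 2 := by
      rw [hε]
      have := min_le_left β (Finset.univ.inf' H fun j => if v α j = β then β else β - v α j)
      linarith
    have hkey : ∀ j, v (α + ε) j < β - ε := by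
      intro j
      rw [hval]
      by_cases hj : v α j = β
      · have hq1 : 1 < pY j / pX j := (one_lt_div (hpX j)).2 (hcon j hj)
        have h2 : ε * 1 < ε * (pY j / pX j) := mul_lt_mul_of_pos_left hq1 hεpos
        rw [hj]; linarith
      · have hinf : (Finset.univ.inf' H fun j => if v α j = β then β else β - v α j)
            ≤ β - v α j := by
          have h3 := Finset.inf'_le (fun j => if v α j = β then β else β - v α j)
            (Finset.mem_univ j)
          rwa [if_neg hj] at h3
        have hj2 : ε ≤ (β - v α j) / 2 := by
          rw [hε]
          have := min_le_right β (Finset.univ.inf' H fun j => if v α j = β then β else β - v α j)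
          linarith
        have h4 : 0 ≤ ε * (pY j / pX j) := le_of_lt (mul_pos hεpos (hq j))
        linarith
    have hBa : B (α + ε) < β - ε := hBlt _ _ (by linarith) hkey
    have hlt : φ (α + ε) < φ α := by
      rw [hφ]; simp only
      rw [← hβdef]
      linarith
    exact absurd (hglob (α + ε) (by linarith)) (not_le.2 hlt)
  -- left optimality
  have leftopt : 0 < α → ∃ k, v α k = β ∧ pX k ≤ pY k := by
    intro hαpos
    by_contra hcon
    push_neg at hcon
    set g : Fin m → ℝ := fun j => if v α j = β then α else (β - v α j) / (pY j / pX j + 1)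
      with hg
    set ε : ℝ := min α (Finset.univ.inf' H g) / 2 with hε
    have hgpos : ∀ j, 0 < g j := by
      intro j
      rw [hg]
      simp only
      split_ifs with hj
      · exact hαpos
      · exact div_pos (sub_pos.2 (lt_of_le_of_ne (hvle j) hj)) (by linarith [hq j])
    have hεpos : 0 < ε := by
      rw [hε]
      refine div_pos (lt_min hαpos ?_) two_pos
      rw [Finset.lt_inf'_iff]
      exact fun j _ => hgpos j
    have hεα : ε ≤ α / 2 := by
      rw [hε]
      have := min_le_left α (Finset.univ.inf' H g)
      linarith
    have hkey : ∀ j, v (α - ε) j < β + ε := by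
      intro j
      rw [hvalm]
      by_cases hj : v α j = β
      · have hq1 : pY j / pX j < 1 := (div_lt_one (hpX j)).2 (hcon j hj)
        have h2 : ε * (pY j / pX j) < ε * 1 := mul_lt_mul_of_pos_left hq1 hεpos
        rw [hj]; linarith
      · have hinf : Finset.univ.inf' H g ≤ (β - v α j) / (pY j / pX j + 1) := by
          have h3 := Finset.inf'_le g (Finset.mem_univ j)
          rw [hg] at h3
          simp only at h3
          rwa [if_neg hj] at h3
        have hj2 : ε ≤ (β - v α j) / (pY j / pX j + 1) / 2 := by
          rw [hε]
          have := min_le_right α (Finset.univ.inf' H g)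
          linarith
        have hd : (0:ℝ) < pY j / pX j + 1 := by linarith [hq j]
        have h5 : ε * (pY j / pX j + 1) ≤ (β - v α j) / 2 := by
          rw [← le_div_iff₀ hd]
          calc ε ≤ (β - v α j) / (pY j / pX j + 1) / 2 := hj2
          _ = (β - v α j) / 2 / (pY j / pX j + 1) := by ring
        have h6 : ε * (pY j / pX j) < ε * (pY j / pX j + 1) :=
          mul_lt_mul_of_pos_left (lt_add_one _) hεpos
        have h7 : 0 < β - v α j := sub_pos.2 (lt_of_le_of_ne (hvle j) hj)
        linarith
    have hBa : B (α - ε) < β + ε := hBlt _ _ (by linarith) hkey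
    have hlt : φ (α - ε) < φ α := by
      rw [hφ]; simp only
      rw [← hβdef]
      linarith
    exact absurd (hglob (α - ε) (by linarith)) (not_le.2 hlt)
  -- construct u ∈ U with ∑ u = α + β
  obtain ⟨u, huU, hsum⟩ : ∃ u, u ∈ Uset pX pY ∧ ∑ i, u i = α + β := by
    by_cases hαz : α = 0
    · have hβpos : 0 < β := by
        have h1 := hvle ⟨0, hm⟩
        rw [hvrep] at h1
        have h0 : α * (pY ⟨0, hm⟩ / pX ⟨0, hm⟩) = 0 := by rw [hαz]; ring
        linarith [hpY (⟨0, hm⟩ : Fin m)]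
      obtain ⟨j, hact, hle⟩ := rightopt hβpos
      have hβval : pY j = β := by
        rw [hvrep, hαz] at hact
        simpa using hact
      refine ⟨fun i => if i = j then pY j else 0, ⟨?_, ?_, ?_⟩, ?_⟩
      · intro i; simp only; split_ifs; exacts [(hpY j).le, le_rfl]
      · rw [sum_ite_div]
        exact div_le_one_of_le₀ hle (hpX j).le
      · rw [sum_ite_div, div_self (hpY j).ne']
      · rw [sum_ite_id, hβval, hαz, zero_add]
    · have hαpos : 0 < α := lt_of_le_of_ne hα0 (Ne.symm hαz)
      by_cases hβz : β = 0
      · obtain ⟨k, hact, hle⟩ := leftopt hαpos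
        have hαval : α = pX k := by
          rw [hβz] at hact
          rw [hv] at hact
          simp only at hact
          rcases mul_eq_zero.1 hact with h | h
          · exact absurd h (hpY k).ne'
          · have h2 : α / pX k = 1 := by linarith
            rw [div_eq_one_iff_eq (hpX k).ne'] at h2
            exact h2
        refine ⟨fun i => if i = k then pX k else 0, ⟨?_, ?_, ?_⟩, ?_⟩
        · intro i; simp only; split_ifs; exacts [(hpX k).le, le_rfl]
        · rw [sum_ite_div, div_self (hpX k).ne']
        · rw [sum_ite_div]
          exact div_le_one_of_le₀ hle (hpY k).le
        · rw [sum_ite_id, hαval, hβz, add_zero]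
      · have hβpos : 0 < β := lt_of_le_of_ne hβ0 (Ne.symm hβz)
        obtain ⟨j, hactj, hlej⟩ := rightopt hβpos
        obtain ⟨k, hactk, hlek⟩ := leftopt hαpos
        have hqj1 : pY j / pX j ≤ 1 := (div_le_one (hpX j)).2 hlej
        have hqk1 : 1 ≤ pY k / pX k := (one_le_div (hpX k)).2 hlek
        obtain ⟨t, ht0, ht1, hteq⟩ := convex_combo hqj1 hqk1
        have hj' : pY j = β + α * (pY j / pX j) := by
          rw [hvrep] at hactj; linarith
        have hk' : pY k = β + α * (pY k / pX k) := by
          rw [hvrep] at hactk; linarith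
        refine ⟨fun i => (if i = j then t * pY j else 0) + (if i = k then (1 - t) * pY k else 0),
          ⟨?_, ?_, ?_⟩, ?_⟩
        · intro i
          simp only
          refine add_nonneg ?_ ?_ <;> split_ifs
          exacts [mul_nonneg ht0 (hpY j).le, le_rfl, mul_nonneg (by linarith) (hpY k).le, le_rfl]
        · have hsplit : ∑ i, ((if i = j then t * pY j else 0) + (if i = k then (1 - t) * pY k else 0)) / pX i
              = t * pY j / pX j + (1 - t) * pY k / pX k := by
            rw [Finset.sum_congr rfl (fun i _ => add_div _ _ (pX i)), Finset.sum_add_distrib,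
              sum_ite_div, sum_ite_div]
          rw [hsplit]
          have h9 : t * pY j / pX j + (1 - t) * pY k / pX k
              = t * (pY j / pX j) + (1 - t) * (pY k / pX k) := by ring
          rw [h9, hteq]
        · have hsplit : ∑ i, ((if i = j then t * pY j else 0) + (if i = k then (1 - t) * pY k else 0)) / pY i
              = t * pY j / pY j + (1 - t) * pY k / pY k := by
            rw [Finset.sum_congr rfl (fun i _ => add_div _ _ (pY i)), Finset.sum_add_distrib,
              sum_ite_div, sum_ite_div]
          rw [hsplit, mul_div_assoc, mul_div_assoc, div_self (hpY j).ne', div_self (hpY k).ne']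
          simp
        · rw [Finset.sum_add_distrib, sum_ite_id, sum_ite_id]
          rw [hj', hk']
          have expand : t * (β + α * (pY j / pX j)) + (1 - t) * (β + α * (pY k / pX k))
              = β + α * (t * (pY j / pX j) + (1 - t) * (pY k / pX k)) := by ring
          rw [expand, hteq]
          ring
  -- weak duality and complementary slackness
  obtain ⟨uh, hLUuh, hmax, _⟩ := exists_LU_max hm hpX hpY
  have hub : α + β ≤ emax pX pY := by
    rw [← hsum, ← hLUuh.2]
    exact hmax u huU
  obtain ⟨us, husLU, huspos, _⟩ := exists_ustar hm hpX hpY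
  obtain ⟨hsx, hsy⟩ := hCaseB us husLU
  have hperi : ∀ i, us i ≤ us i * (α / pX i + β / pY i) := fun i =>
    le_mul_of_one_le_right (husLU.1.1 i) (hfeas i)
  have hexp : ∑ i, us i * (α / pX i + β / pY i) = α + β := by
    have hterm : ∀ i, us i * (α / pX i + β / pY i)
        = α * (us i / pX i) + β * (us i / pY i) := by
      intro i; ring
    rw [Finset.sum_congr rfl (fun i _ => hterm i), Finset.sum_add_distrib,
      ← Finset.mul_sum, ← Finset.mul_sum, hsx, hsy]
    ring
  have hemaxle : emax pX pY ≤ α + β := by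
    rw [← hexp, ← husLU.2]
    exact Finset.sum_le_sum fun i _ => hperi i
  have heq0 : ∑ i, (us i * (α / pX i + β / pY i) - us i) = 0 := by
    rw [Finset.sum_sub_distrib, hexp, husLU.2]
    linarith
  have hall := (Finset.sum_eq_zero_iff_of_nonneg
    (fun i _ => sub_nonneg.2 (hperi i))).1 heq0
  refine ⟨α, β, hα0, hβ0, hfeas, ?_⟩
  intro i hi
  have h := hall i (Finset.mem_univ i)
  have hpos := huspos i hi
  have hfact : us i * (α / pX i + β / pY i - 1) = 0 := by linear_combination h
  rcases mul_eq_zero.1 hfact with h1 | h1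
  · exact absurd h1 hpos.ne'
  · linarith

end Part3

section Part4

variable {m : ℕ}

lemma sum_ite_mem_eq (J : Finset (Fin m)) (g : Fin m → ℝ) :
    ∑ i, (if i ∈ J then g i else 0) = ∑ i ∈ J, g i := by
  rw [Finset.sum_ite_mem, Finset.univ_inter]

lemma ite_div_eq (P : Prop) [Decidable P] (w f : ℝ) :
    (if P then w else 0) / f = if P then w / f else 0 := by
  split_ifs <;> simp

lemma ub_lemma (pX pY : Fin m → ℝ) (hpX : ∀ i, 0 < pX i) (hpY : ∀ i, 0 < pY i)
    (J : Finset (Fin m)) (a b : ℝ) (ha : 0 ≤ a) (hb : 0 ≤ b)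
    (hfeas : ∀ i, 1 ≤ a / pX i + b / pY i)
    (heq : ∀ i ∈ J, a / pX i + b / pY i = 1)
    (ν1 ν2 : Fin m → ℝ) (hv1 : ∀ i ∉ J, ν1 i = 0) (hv2 : ∀ i ∉ J, ν2 i = 0)
    (y1 y2 : Fin m → ℝ) (hy1 : ∑ i, y1 i = 0) (hy2 : ∑ i, y2 i = 0)
    (hs1 : ∀ i ∉ J, 0 ≤ y1 i) (hs2 : ∀ i ∉ J, 0 ≤ y2 i) :
    ∑ i, min (pX i * y1 i + ν1 i) (pY i * y2 i + ν2 i)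
      ≤ a * (∑ i, ν1 i / pX i) + b * (∑ i, ν2 i / pY i) := by
  have step : ∀ i, min (pX i * y1 i + ν1 i) (pY i * y2 i + ν2 i)
      ≤ (a / pX i) * (pX i * y1 i + ν1 i) + (b / pY i) * (pY i * y2 i + ν2 i) := by
    intro i
    have hta : 0 ≤ a / pX i := div_nonneg ha (hpX i).le
    have htb : 0 ≤ b / pY i := div_nonneg hb (hpY i).le
    have h1 : min (pX i * y1 i + ν1 i) (pY i * y2 i + ν2 i) ≤ pX i * y1 i + ν1 i :=
      min_le_left _ _
    have h2 : min (pX i * y1 i + ν1 i) (pY i * y2 i + ν2 i) ≤ pY i * y2 i + ν2 i :=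
      min_le_right _ _
    have hm1 := mul_le_mul_of_nonneg_left h1 hta
    have hm2 := mul_le_mul_of_nonneg_left h2 htb
    by_cases hiJ : i ∈ J
    · have hc := heq i hiJ
      have h3 : (a / pX i + b / pY i) * min (pX i * y1 i + ν1 i) (pY i * y2 i + ν2 i)
          = min (pX i * y1 i + ν1 i) (pY i * y2 i + ν2 i) := by rw [hc, one_mul]
      nlinarith [hm1, hm2, h3]
    · have hc := hfeas i
      have hA0 : 0 ≤ pX i * y1 i + ν1 i := by
        rw [hv1 i hiJ, add_zero]
        exact mul_nonneg (hpX i).le (hs1 i hiJ)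
      have hB0 : 0 ≤ pY i * y2 i + ν2 i := by
        rw [hv2 i hiJ, add_zero]
        exact mul_nonneg (hpY i).le (hs2 i hiJ)
      have hmin0 : 0 ≤ min (pX i * y1 i + ν1 i) (pY i * y2 i + ν2 i) := le_min hA0 hB0
      have h4 : min (pX i * y1 i + ν1 i) (pY i * y2 i + ν2 i)
          ≤ (a / pX i + b / pY i) * min (pX i * y1 i + ν1 i) (pY i * y2 i + ν2 i) :=
        le_mul_of_one_le_left hmin0 hc
      nlinarith [hm1, hm2, h4]
  calc ∑ i, min (pX i * y1 i + ν1 i) (pY i * y2 i + ν2 i)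
      ≤ ∑ i, ((a / pX i) * (pX i * y1 i + ν1 i) + (b / pY i) * (pY i * y2 i + ν2 i)) :=
        Finset.sum_le_sum fun i _ => step i
  _ = a * (∑ i, y1 i) + b * (∑ i, y2 i)
      + (a * (∑ i, ν1 i / pX i) + b * (∑ i, ν2 i / pY i)) := by
      have hterm : ∀ i, (a / pX i) * (pX i * y1 i + ν1 i) + (b / pY i) * (pY i * y2 i + ν2 i)
          = a * y1 i + b * y2 i + (a * (ν1 i / pX i) + b * (ν2 i / pY i)) := by
        intro i
        field_simp [(hpX i).ne', (hpY i).ne']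
        ring
      rw [Finset.sum_congr rfl fun i _ => hterm i]
      rw [Finset.sum_add_distrib, Finset.sum_add_distrib, Finset.sum_add_distrib,
        ← Finset.mul_sum, ← Finset.mul_sum, ← Finset.mul_sum, ← Finset.mul_sum]
  _ = a * (∑ i, ν1 i / pX i) + b * (∑ i, ν2 i / pY i) := by
      rw [hy1, hy2]
      ring

end Part4

section Part5

variable {m : ℕ}

set_option maxHeartbeats 2000000 in
lemma case2half (pX pY : Fin m → ℝ) (hpX : ∀ i, 0 < pX i) (hpY : ∀ i, 0 < pY i)
    (J : Finset (Fin m)) (j0 : Fin m) (hj0 : j0 ∈ J)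
    (hcX : ∀ i ∈ J, pX i = pX j0) (hcY : ∀ i ∈ J, pY i = pY j0)
    (α β : ℝ) (hα0 : 0 ≤ α) (hβ0 : 0 ≤ β)
    (hfeas : ∀ i, 1 ≤ α / pX i + β / pY i)
    (heqJ : ∀ i ∈ J, α / pX i + β / pY i = 1) :
    ∃ K, 0 < K ∧ ∀ ν1 ν2 : Fin m → ℝ, (∀ i ∉ J, ν1 i = 0) → (∀ i ∉ J, ν2 i = 0) →
      (∑ i, ν1 i) ≤ (∑ i, ν2 i) →
      ∃ x1 x2 : Fin m → ℝ,
        (∑ i, x1 i) = 0 ∧ (∑ i, x2 i) = 0 ∧ (∀ i ∉ J, 0 ≤ x1 i) ∧ (∀ i ∉ J, 0 ≤ x2 i) ∧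
        (∀ i, |x1 i| ≤ K * (‖ν1‖ + ‖ν2‖)) ∧ (∀ i, |x2 i| ≤ K * (‖ν1‖ + ‖ν2‖)) ∧
        (∀ y1 y2 : Fin m → ℝ, (∑ i, y1 i) = 0 → (∑ i, y2 i) = 0 →
          (∀ i ∉ J, 0 ≤ y1 i) → (∀ i ∉ J, 0 ≤ y2 i) →
          ∑ i, min (pX i * y1 i + ν1 i) (pY i * y2 i + ν2 i)
            ≤ ∑ i, min (pX i * x1 i + ν1 i) (pY i * x2 i + ν2 i)) := by
  classical
  have hpX0 : 0 < pX j0 := hpX j0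
  have hpY0 : 0 < pY j0 := hpY j0
  have hβval : β = pY j0 * (1 - α / pX j0) := by
    have h := heqJ j0 hj0
    have h2 : β / pY j0 = 1 - α / pX j0 := by linarith
    calc β = pY j0 * (β / pY j0) := by
          rw [mul_comm]; exact (div_mul_cancel₀ β hpY0.ne').symm
    _ = pY j0 * (1 - α / pX j0) := by rw [h2]
  obtain ⟨γ, hγ⟩ : ∃ γ : Fin m → ℝ, ∀ k, γ k = 1 / pX k - pY j0 / (pY k * pX j0) :=
    ⟨_, fun k => rfl⟩
  obtain ⟨δ, hδ⟩ : ∃ δ : Fin m → ℝ, ∀ k, δ k = 1 - pY j0 / pY k := ⟨_, fun k => rfl⟩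
  have hkey : ∀ (a : ℝ) (k : Fin m),
      a / pX k + (pY j0 * (1 - a / pX j0)) / pY k = a * γ k + pY j0 / pY k := by
    intro a k
    rw [hγ k]
    field_simp [(hpX k).ne', (hpY k).ne', hpX0.ne', hpY0.ne']
    ring
  have hfeasiff : ∀ (a : ℝ) (k : Fin m),
      (1 ≤ a / pX k + (pY j0 * (1 - a / pX j0)) / pY k) ↔ δ k ≤ a * γ k := by
    intro a k
    rw [hkey, hδ k]
    constructor <;> intro h <;> linarith
  have hαfeas : ∀ k, δ k ≤ α * γ k := by
    intro k
    refine (hfeasiff α k).1 ?_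
    rw [← hβval]
    exact hfeas k
  have hγJ : ∀ i ∈ J, γ i = 0 := by
    intro i hi
    rw [hγ i, hcX i hi, hcY i hi]
    field_simp
    ring
  have hαpX0 : α ≤ pX j0 := by
    have h := heqJ j0 hj0
    have h0 : 0 ≤ β / pY j0 := div_nonneg hβ0 hpY0.le
    have h2 : α / pX j0 ≤ 1 := by linarith
    exact (div_le_one hpX0).1 h2
  set Kneg : Finset (Fin m) := Finset.univ.filter (fun k => γ k < 0) with hKnegdef
  set a' : ℝ := if h : Kneg.Nonempty then min (pX j0) (Kneg.inf' h fun k => δ k / γ k)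
    else pX j0 with ha'def
  have hαa' : α ≤ a' := by
    rw [ha'def]
    split_ifs with h
    · refine le_min hαpX0 ?_
      rw [Finset.le_inf'_iff]
      intro k hk
      have hγk : γ k < 0 := (Finset.mem_filter.1 hk).2
      rw [le_div_iff_of_neg hγk]
      exact hαfeas k
    · exact hαpX0
  have ha'0 : 0 ≤ a' := le_trans hα0 hαa'
  have ha'le : a' ≤ pX j0 := by
    rw [ha'def]; split_ifs
    exacts [min_le_left _ _, le_rfl]
  set b' : ℝ := pY j0 * (1 - a' / pX j0) with hb'def
  have hb'0 : 0 ≤ b' := mul_nonneg hpY0.le (by rw [sub_nonneg]; exact (div_le_one hpX0).2 ha'le)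
  have ha'feas : ∀ k, δ k ≤ a' * γ k := by
    intro k
    rcases lt_trichotomy (γ k) 0 with hγk | hγk | hγk
    · have hkK : k ∈ Kneg := Finset.mem_filter.2 ⟨Finset.mem_univ _, hγk⟩
      have hKne : Kneg.Nonempty := ⟨k, hkK⟩
      have hle : a' ≤ δ k / γ k := by
        rw [ha'def, dif_pos hKne]
        exact le_trans (min_le_right _ _) (Finset.inf'_le _ hkK)
      rwa [le_div_iff_of_neg hγk] at hle
    · rw [hγk, mul_zero]
      have h := hαfeas k
      rw [hγk, mul_zero] at h
      exact h
    · calc δ k ≤ α * γ k := hαfeas k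
      _ ≤ a' * γ k := mul_le_mul_of_nonneg_right hαa' hγk.le
  have hfeas' : ∀ k, 1 ≤ a' / pX k + b' / pY k := by
    intro k
    rw [hb'def]
    exact (hfeasiff a' k).2 (ha'feas k)
  have heqJ' : ∀ i ∈ J, a' / pX i + b' / pY i = 1 := by
    intro i hi
    rw [hcX i hi, hcY i hi]
    have h2 : b' / pY j0 = 1 - a' / pX j0 := by
      rw [hb'def]
      exact mul_div_cancel_left₀ _ hpY0.ne'
    rw [h2]; ring
  have hsplit : a' = pX j0 ∨ ∃ k, γ k < 0 ∧ a' = δ k / γ k := by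
    rw [ha'def]
    split_ifs with h
    · rcases le_total (pX j0) (Kneg.inf' h fun k => δ k / γ k) with hle | hle
      · left; exact min_eq_left hle
      · obtain ⟨k, hk, hkeq⟩ := Finset.exists_mem_eq_inf' h (fun k => δ k / γ k)
        right
        exact ⟨k, (Finset.mem_filter.1 hk).2, by rw [min_eq_right hle, hkeq]⟩
    · left; rfl
  have hγrep : ∀ k, pX j0 * γ k = pX j0 / pX k - pY j0 / pY k := by
    intro k
    rw [hγ k]
    field_simp [(hpX k).ne', (hpY k).ne', hpX0.ne', hpY0.ne']
  have hr0 : (0:ℝ) < (J.card : ℝ) := by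
    exact_mod_cast Finset.card_pos.2 ⟨j0, hj0⟩
  have hr1 : (1:ℝ) ≤ (J.card : ℝ) := by
    exact_mod_cast Finset.card_pos.2 ⟨j0, hj0⟩
  have hcXpos : (0:ℝ) < ∑ i, (1 / pX i + 1 / pY i) :=
    Finset.sum_pos (fun i _ => add_pos (div_pos one_pos (hpX i)) (div_pos one_pos (hpY i)))
      ⟨j0, Finset.mem_univ _⟩
  set cX : ℝ := ∑ i, (1 / pX i + 1 / pY i) with hcXdef
  have hcXX : ∀ i, 1 / pX i ≤ cX := by
    intro i
    calc 1 / pX i ≤ 1 / pX i + 1 / pY i :=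
          le_add_of_nonneg_right (le_of_lt (div_pos one_pos (hpY i)))
    _ ≤ ∑ i, (1 / pX i + 1 / pY i) :=
        Finset.single_le_sum (f := fun i => 1 / pX i + 1 / pY i)
          (fun i _ => le_of_lt (add_pos (div_pos one_pos (hpX i)) (div_pos one_pos (hpY i))))
          (Finset.mem_univ i)
  have hcXY : ∀ i, 1 / pY i ≤ cX := by
    intro i
    calc 1 / pY i ≤ 1 / pX i + 1 / pY i :=
          le_add_of_nonneg_left (le_of_lt (div_pos one_pos (hpX i)))
    _ ≤ ∑ i, (1 / pX i + 1 / pY i) :=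
        Finset.single_le_sum (f := fun i => 1 / pX i + 1 / pY i)
          (fun i _ => le_of_lt (add_pos (div_pos one_pos (hpX i)) (div_pos one_pos (hpY i))))
          (Finset.mem_univ i)
  have hsum_ind : ∀ (c : ℝ) (f : Fin m → ℝ), (∀ i ∈ J, f i = f j0) →
      ∑ i, (if i ∈ J then c else 0) / f i = (J.card : ℝ) * (c / f j0) := by
    intro c f hf
    rw [Finset.sum_congr rfl (fun i _ => ite_div_eq (i ∈ J) c (f i)),
      _root_.sum_ite_mem_eq]
    rw [Finset.sum_congr rfl (fun i hi => by rw [hf i hi])]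
    rw [Finset.sum_const, nsmul_eq_mul]
  have hsum_ind' : ∀ (c : ℝ), ∑ i, (if i ∈ J then c else 0) = (J.card : ℝ) * c := by
    intro c
    have h := hsum_ind c (fun _ => 1) (fun _ _ => rfl)
    simpa using h
  rcases hsplit with hA | ⟨k, hγk, ha'k⟩
  · -- Case a' = pX j0
    have hXfeasA : ∀ i, 1 ≤ pX j0 / pX i + 0 / pY i := by
      intro i
      have h := ha'feas i
      rw [hA] at h
      have hid : pX j0 * γ i - δ i = pX j0 / pX i - 1 := by
        rw [hγ i, hδ i]
        field_simp [(hpX i).ne', (hpY i).ne', hpX0.ne', hpY0.ne']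
        ring
      rw [zero_div, add_zero]
      linarith
    have heqJA : ∀ i ∈ J, pX j0 / pX i + 0 / pY i = 1 := by
      intro i hi
      rw [hcX i hi, zero_div, add_zero, div_self hpX0.ne']
    refine ⟨(3 * m + 1) * cX + 1,
      add_pos_of_nonneg_of_pos (mul_nonneg (by positivity) hcXpos.le) one_pos, ?_⟩
    intro ν1 ν2 hv1 hv2 hSAB
    set N : ℝ := ‖ν1‖ + ‖ν2‖ with hNdef
    have hN0 : 0 ≤ N := add_nonneg (norm_nonneg _) (norm_nonneg _)
    have hN1 : ∀ i, |ν1 i| ≤ N := by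
      intro i
      calc |ν1 i| = ‖ν1 i‖ := (Real.norm_eq_abs _).symm
      _ ≤ ‖ν1‖ := norm_le_pi_norm ν1 i
      _ ≤ N := le_add_of_nonneg_right (norm_nonneg _)
    have hN2 : ∀ i, |ν2 i| ≤ N := by
      intro i
      calc |ν2 i| = ‖ν2 i‖ := (Real.norm_eq_abs _).symm
      _ ≤ ‖ν2‖ := norm_le_pi_norm ν2 i
      _ ≤ N := le_add_of_nonneg_left (norm_nonneg _)
    have hSAbd : |∑ i, ν1 i| ≤ m * N := by
      calc |∑ i, ν1 i| ≤ ∑ i, |ν1 i| := Finset.abs_sum_le_sum_abs _ _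
      _ ≤ ∑ _i : Fin m, N := Finset.sum_le_sum fun i _ => hN1 i
      _ = m * N := by rw [Finset.sum_const, Finset.card_univ, Fintype.card_fin, nsmul_eq_mul]
    have hSBbd : |∑ i, ν2 i| ≤ m * N := by
      calc |∑ i, ν2 i| ≤ ∑ i, |ν2 i| := Finset.abs_sum_le_sum_abs _ _
      _ ≤ ∑ _i : Fin m, N := Finset.sum_le_sum fun i _ => hN2 i
      _ = m * N := by rw [Finset.sum_const, Finset.card_univ, Fintype.card_fin, nsmul_eq_mul]
    set SA : ℝ := ∑ i, ν1 i with hSAdef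
    set SB : ℝ := ∑ i, ν2 i with hSBdef
    have hn1 : ∑ i, ν1 i / pX i = SA / pX j0 := by
      rw [hSAdef, Finset.sum_div]
      refine Finset.sum_congr rfl fun i _ => ?_
      by_cases hi : i ∈ J
      · rw [hcX i hi]
      · rw [hv1 i hi]; simp
    have hn2 : ∑ i, ν2 i / pY i = SB / pY j0 := by
      rw [hSBdef, Finset.sum_div]
      refine Finset.sum_congr rfl fun i _ => ?_
      by_cases hi : i ∈ J
      · rw [hcY i hi]
      · rw [hv2 i hi]; simp
    obtain ⟨A, hA'⟩ : ∃ A : Fin m → ℝ, ∀ i, A i = if i ∈ J then SA / (J.card : ℝ) else 0 :=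
      ⟨_, fun _ => rfl⟩
    obtain ⟨Bv, hBv⟩ : ∃ Bv : Fin m → ℝ,
        ∀ i, Bv i = A i + (if i = j0 then SB - SA else 0) := ⟨_, fun _ => rfl⟩
    obtain ⟨x1, hx1⟩ : ∃ x1 : Fin m → ℝ, ∀ i, x1 i = (A i - ν1 i) / pX i := ⟨_, fun _ => rfl⟩
    obtain ⟨x2, hx2⟩ : ∃ x2 : Fin m → ℝ, ∀ i, x2 i = (Bv i - ν2 i) / pY i := ⟨_, fun _ => rfl⟩
    have hAbd : ∀ i, |A i| ≤ m * N := by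
      intro i
      rw [hA' i]
      split_ifs with hi
      · rw [abs_div, abs_of_pos hr0, div_le_iff₀ hr0]
        calc |SA| ≤ m * N := hSAbd
        _ ≤ m * N * (J.card : ℝ) := le_mul_of_one_le_right
            (mul_nonneg (by positivity) hN0) hr1
      · rw [abs_zero]
        exact mul_nonneg (by positivity) hN0
    have hBvbd : ∀ i, |Bv i| ≤ (3 * m) * N := by
      intro i
      rw [hBv i]
      calc |A i + (if i = j0 then SB - SA else 0)|
          ≤ |A i| + |if i = j0 then SB - SA else 0| := abs_add_le _ _
      _ ≤ m * N + 2 * (m * N) := by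
          refine add_le_add (hAbd i) ?_
          split_ifs
          · calc |SB - SA| ≤ |SB| + |SA| := abs_sub _ _
            _ ≤ m * N + m * N := add_le_add hSBbd hSAbd
            _ = 2 * (m * N) := by ring
          · rw [abs_zero]
            exact mul_nonneg (by norm_num) (mul_nonneg (by positivity) hN0)
      _ = (3 * m) * N := by ring
    have hx1A : ∀ i, pX i * x1 i + ν1 i = A i := by
      intro i
      rw [hx1 i, mul_comm, div_mul_cancel₀ _ (hpX i).ne']
      ring
    have hx2B : ∀ i, pY i * x2 i + ν2 i = Bv i := by
      intro i
      rw [hx2 i, mul_comm, div_mul_cancel₀ _ (hpY i).ne']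
      ring
    have hABle : ∀ i, A i ≤ Bv i := by
      intro i
      rw [hBv i]
      refine le_add_of_nonneg_right ?_
      split_ifs
      · linarith
      · exact le_rfl
    refine ⟨x1, x2, ?_, ?_, ?_, ?_, ?_, ?_, ?_⟩
    · rw [Finset.sum_congr rfl (fun i _ => hx1 i),
        Finset.sum_congr rfl (fun i _ => sub_div (A i) (ν1 i) (pX i)),
        Finset.sum_sub_distrib, hn1,
        Finset.sum_congr rfl (fun i _ => by rw [hA' i]),
        hsum_ind (SA / (J.card : ℝ)) pX hcX]
      field_simp
      ring
    · rw [Finset.sum_congr rfl (fun i _ => hx2 i),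
        Finset.sum_congr rfl (fun i _ => sub_div (Bv i) (ν2 i) (pY i)),
        Finset.sum_sub_distrib, hn2,
        Finset.sum_congr rfl (fun i _ => by rw [hBv i]),
        Finset.sum_congr rfl (fun i _ => add_div (A i) _ (pY i)),
        Finset.sum_add_distrib,
        Finset.sum_congr rfl (fun i _ => by rw [hA' i]),
        hsum_ind (SA / (J.card : ℝ)) pY hcY, sum_ite_div (SB - SA) j0 pY]
      field_simp
      ring
    · intro i hi
      rw [hx1 i, hA' i, if_neg hi, hv1 i hi]
      simp
    · intro i hi
      have hij0 : i ≠ j0 := fun h => hi (h ▸ hj0)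
      rw [hx2 i, hBv i, hA' i, if_neg hi, if_neg hij0, hv2 i hi]
      simp
    · intro i
      rw [hx1 i, abs_div, abs_of_pos (hpX i), div_le_iff₀ (hpX i)]
      have h1 : (1:ℝ) ≤ cX * pX i := by
        have := hcXX i
        rw [div_le_iff₀ (hpX i)] at this
        linarith
      have h2 : (3 * (m:ℝ) + 1) * N * 1 ≤ (3 * m + 1) * N * (cX * pX i) :=
        mul_le_mul_of_nonneg_left h1 (mul_nonneg (by positivity) hN0)
      calc |A i - ν1 i| ≤ |A i| + |ν1 i| := abs_sub _ _
      _ ≤ m * N + N := add_le_add (hAbd i) (hN1 i)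
      _ ≤ ((3 * m + 1) * cX + 1) * N * pX i := by
          have h3 : (0:ℝ) ≤ (m:ℝ) * N := mul_nonneg (by positivity) hN0
          linarith [h2, mul_nonneg hN0 (hpX i).le]
    · intro i
      rw [hx2 i, abs_div, abs_of_pos (hpY i), div_le_iff₀ (hpY i)]
      have h1 : (1:ℝ) ≤ cX * pY i := by
        have := hcXY i
        rw [div_le_iff₀ (hpY i)] at this
        linarith
      have h2 : (3 * (m:ℝ) + 1) * N * 1 ≤ (3 * m + 1) * N * (cX * pY i) :=
        mul_le_mul_of_nonneg_left h1 (mul_nonneg (by positivity) hN0)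
      calc |Bv i - ν2 i| ≤ |Bv i| + |ν2 i| := abs_sub _ _
      _ ≤ (3 * m) * N + N := add_le_add (hBvbd i) (hN2 i)
      _ ≤ ((3 * m + 1) * cX + 1) * N * pY i := by
          have h3 : (0:ℝ) ≤ (m:ℝ) * N := mul_nonneg (by positivity) hN0
          linarith [h2, mul_nonneg hN0 (hpY i).le]
    · intro y1 y2 hy1 hy2 hsy1 hsy2
      refine le_trans (ub_lemma pX pY hpX hpY J (pX j0) 0 hpX0.le le_rfl hXfeasA heqJA
        ν1 ν2 hv1 hv2 y1 y2 hy1 hy2 hsy1 hsy2) (le_of_eq ?_)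
      have hRHS : ∑ i, min (pX i * x1 i + ν1 i) (pY i * x2 i + ν2 i) = SA := by
        rw [Finset.sum_congr rfl
          (fun i _ => by rw [hx1A i, hx2B i, min_eq_left (hABle i)]),
          Finset.sum_congr rfl (fun i _ => by rw [hA' i]),
          hsum_ind' (SA / (J.card : ℝ))]
        field_simp
      rw [hRHS, hn1, hn2]
      rw [mul_comm (pX j0) (SA / pX j0), div_mul_cancel₀ _ hpX0.ne']
      ring
  · -- Case a' = δ k / γ k with γ k < 0
    have hγkne : pX j0 * γ k ≠ 0 := ne_of_lt (mul_neg_of_pos_of_neg hpX0 hγk)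
    have hck : a' / pX k + b' / pY k = 1 := by
      have ha'γ : a' * γ k = δ k := by
        rw [ha'k]
        exact div_mul_cancel₀ _ (ne_of_lt hγk)
      rw [hb'def, hkey a' k, ha'γ, hδ k]
      ring
    have hczpos : (0:ℝ) < 1 / (pX j0 * (-γ k)) := by
      have h : 0 < pX j0 * (-γ k) := mul_pos hpX0 (by linarith)
      positivity
    set cz : ℝ := 1 / (pX j0 * (-γ k)) with hczdef
    have hpXdk : 0 < pX j0 / pX k := div_pos hpX0 (hpX k)
    have hcW0 : (0:ℝ) ≤ m + 2 * m * cz * (pX j0 / pX k) := by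
      have : (0:ℝ) ≤ 2 * m * cz * (pX j0 / pX k) :=
        mul_nonneg (mul_nonneg (by positivity) hczpos.le) hpXdk.le
      positivity
    set cW : ℝ := m + 2 * m * cz * (pX j0 / pX k) with hcWdef
    have hcA0 : (0:ℝ) ≤ cW + 2 * m * cz := by
      have : (0:ℝ) ≤ 2 * m * cz := mul_nonneg (by positivity) hczpos.le
      linarith [hcW0]
    set cA : ℝ := cW + 2 * m * cz with hcAdef
    refine ⟨(cA + 1) * cX + 1,
      add_pos_of_nonneg_of_pos (mul_nonneg (by linarith) hcXpos.le) one_pos, ?_⟩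
    intro ν1 ν2 hv1 hv2 hSAB
    set N : ℝ := ‖ν1‖ + ‖ν2‖ with hNdef
    have hN0 : 0 ≤ N := add_nonneg (norm_nonneg _) (norm_nonneg _)
    have hN1 : ∀ i, |ν1 i| ≤ N := by
      intro i
      calc |ν1 i| = ‖ν1 i‖ := (Real.norm_eq_abs _).symm
      _ ≤ ‖ν1‖ := norm_le_pi_norm ν1 i
      _ ≤ N := le_add_of_nonneg_right (norm_nonneg _)
    have hN2 : ∀ i, |ν2 i| ≤ N := by
      intro i
      calc |ν2 i| = ‖ν2 i‖ := (Real.norm_eq_abs _).symm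
      _ ≤ ‖ν2‖ := norm_le_pi_norm ν2 i
      _ ≤ N := le_add_of_nonneg_left (norm_nonneg _)
    have hSAbd : |∑ i, ν1 i| ≤ m * N := by
      calc |∑ i, ν1 i| ≤ ∑ i, |ν1 i| := Finset.abs_sum_le_sum_abs _ _
      _ ≤ ∑ _i : Fin m, N := Finset.sum_le_sum fun i _ => hN1 i
      _ = m * N := by rw [Finset.sum_const, Finset.card_univ, Fintype.card_fin, nsmul_eq_mul]
    have hSBbd : |∑ i, ν2 i| ≤ m * N := by
      calc |∑ i, ν2 i| ≤ ∑ i, |ν2 i| := Finset.abs_sum_le_sum_abs _ _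
      _ ≤ ∑ _i : Fin m, N := Finset.sum_le_sum fun i _ => hN2 i
      _ = m * N := by rw [Finset.sum_const, Finset.card_univ, Fintype.card_fin, nsmul_eq_mul]
    set SA : ℝ := ∑ i, ν1 i with hSAdef
    set SB : ℝ := ∑ i, ν2 i with hSBdef
    have hn1 : ∑ i, ν1 i / pX i = SA / pX j0 := by
      rw [hSAdef, Finset.sum_div]
      refine Finset.sum_congr rfl fun i _ => ?_
      by_cases hi : i ∈ J
      · rw [hcX i hi]
      · rw [hv1 i hi]; simp
    have hn2 : ∑ i, ν2 i / pY i = SB / pY j0 := by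
      rw [hSBdef, Finset.sum_div]
      refine Finset.sum_congr rfl fun i _ => ?_
      by_cases hi : i ∈ J
      · rw [hcY i hi]
      · rw [hv2 i hi]; simp
    set z : ℝ := (SA - SB) / (pX j0 * γ k) with hzdef
    have hz0 : 0 ≤ z := by
      rw [hzdef]
      exact div_nonneg_of_nonpos (by linarith)
        (le_of_lt (mul_neg_of_pos_of_neg hpX0 hγk))
    have hzbd : |z| ≤ 2 * m * cz * N := by
      rw [hzdef, abs_div, abs_of_neg (mul_neg_of_pos_of_neg hpX0 hγk)]
      rw [div_le_iff₀ (by linarith [mul_neg_of_pos_of_neg hpX0 hγk] :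
        (0:ℝ) < -(pX j0 * γ k))]
      have hcze : cz * (-(pX j0 * γ k)) = 1 := by
        rw [hczdef]
        field_simp
        exact div_self hγk.ne
      calc |SA - SB| ≤ |SA| + |SB| := abs_sub _ _
      _ ≤ m * N + m * N := add_le_add hSAbd hSBbd
      _ = 2 * m * N * 1 := by ring
      _ = 2 * m * cz * N * (-(pX j0 * γ k)) := by rw [← hcze]; ring
    have hzmul : z * (pX j0 * γ k) = SA - SB := by
      rw [hzdef]
      exact div_mul_cancel₀ _ hγkne
    set W : ℝ := SA - z * (pX j0 / pX k) with hWdef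
    have hW2 : W = SB - z * (pY j0 / pY k) := by
      rw [hWdef]
      linear_combination z * (hγrep k) - hzmul
    have hWbd : |W| ≤ cW * N := by
      rw [hWdef, hcWdef]
      calc |SA - z * (pX j0 / pX k)| ≤ |SA| + |z| * (pX j0 / pX k) := by
            refine le_trans (abs_sub _ _) ?_
            rw [abs_mul, abs_of_pos hpXdk]
      _ ≤ m * N + 2 * m * cz * N * (pX j0 / pX k) := by
            refine add_le_add hSAbd ?_
            exact mul_le_mul_of_nonneg_right hzbd hpXdk.le
      _ = (↑m + 2 * ↑m * cz * (pX j0 / pX k)) * N := by ring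
    obtain ⟨A, hA'⟩ : ∃ A : Fin m → ℝ,
        ∀ i, A i = (if i ∈ J then W / (J.card : ℝ) else 0) + (if i = k then z else 0) :=
      ⟨_, fun _ => rfl⟩
    obtain ⟨x1, hx1⟩ : ∃ x1 : Fin m → ℝ, ∀ i, x1 i = (A i - ν1 i) / pX i := ⟨_, fun _ => rfl⟩
    obtain ⟨x2, hx2⟩ : ∃ x2 : Fin m → ℝ, ∀ i, x2 i = (A i - ν2 i) / pY i := ⟨_, fun _ => rfl⟩
    have hAbd : ∀ i, |A i| ≤ cA * N := by
      intro i
      rw [hA' i, hcAdef]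
      calc |(if i ∈ J then W / (J.card : ℝ) else 0) + (if i = k then z else 0)|
          ≤ |if i ∈ J then W / (J.card : ℝ) else 0| + |if i = k then z else 0| := abs_add_le _ _
      _ ≤ cW * N + 2 * m * cz * N := by
          refine add_le_add ?_ ?_
          · split_ifs with hi
            · rw [abs_div, abs_of_pos hr0, div_le_iff₀ hr0]
              calc |W| ≤ cW * N := hWbd
              _ ≤ cW * N * (J.card : ℝ) := le_mul_of_one_le_right
                  (mul_nonneg hcW0 hN0) hr1
            · rw [abs_zero]
              exact mul_nonneg hcW0 hN0
          · split_ifs with hi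
            · exact hzbd
            · rw [abs_zero]
              exact mul_nonneg (mul_nonneg (by positivity) hczpos.le) hN0
      _ = (cW + 2 * ↑m * cz) * N := by ring
    have hx1A : ∀ i, pX i * x1 i + ν1 i = A i := by
      intro i
      rw [hx1 i, mul_comm, div_mul_cancel₀ _ (hpX i).ne']
      ring
    have hx2A : ∀ i, pY i * x2 i + ν2 i = A i := by
      intro i
      rw [hx2 i, mul_comm, div_mul_cancel₀ _ (hpY i).ne']
      ring
    have hsumAX : ∑ i, A i / pX i = W / pX j0 + z / pX k := by
      rw [Finset.sum_congr rfl (fun i _ => by rw [hA' i]),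
        Finset.sum_congr rfl (fun i _ => add_div _ _ (pX i)), Finset.sum_add_distrib,
        hsum_ind (W / (J.card : ℝ)) pX hcX, sum_ite_div z k pX]
      congr 1
      rw [div_div, ← mul_div_assoc, mul_div_mul_left _ _ hr0.ne']
    have hsumAY : ∑ i, A i / pY i = W / pY j0 + z / pY k := by
      rw [Finset.sum_congr rfl (fun i _ => by rw [hA' i]),
        Finset.sum_congr rfl (fun i _ => add_div _ _ (pY i)), Finset.sum_add_distrib,
        hsum_ind (W / (J.card : ℝ)) pY hcY, sum_ite_div z k pY]
      congr 1
      rw [div_div, ← mul_div_assoc, mul_div_mul_left _ _ hr0.ne']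
    refine ⟨x1, x2, ?_, ?_, ?_, ?_, ?_, ?_, ?_⟩
    · rw [Finset.sum_congr rfl (fun i _ => hx1 i),
        Finset.sum_congr rfl (fun i _ => sub_div (A i) (ν1 i) (pX i)),
        Finset.sum_sub_distrib, hn1, hsumAX, hWdef]
      field_simp
      ring
    · rw [Finset.sum_congr rfl (fun i _ => hx2 i),
        Finset.sum_congr rfl (fun i _ => sub_div (A i) (ν2 i) (pY i)),
        Finset.sum_sub_distrib, hn2, hsumAY, hW2]
      field_simp
      ring
    · intro i hi
      rw [hx1 i, hA' i, if_neg hi, hv1 i hi]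
      refine div_nonneg ?_ (hpX i).le
      split_ifs
      · simpa using hz0
      · simp
    · intro i hi
      rw [hx2 i, hA' i, if_neg hi, hv2 i hi]
      refine div_nonneg ?_ (hpY i).le
      split_ifs
      · simpa using hz0
      · simp
    · intro i
      rw [hx1 i, abs_div, abs_of_pos (hpX i), div_le_iff₀ (hpX i)]
      have h1 : (1:ℝ) ≤ cX * pX i := by
        have := hcXX i
        rw [div_le_iff₀ (hpX i)] at this
        linarith
      have h2 : (cA + 1) * N * 1 ≤ (cA + 1) * N * (cX * pX i) :=
        mul_le_mul_of_nonneg_left h1 (mul_nonneg (by linarith) hN0)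
      calc |A i - ν1 i| ≤ |A i| + |ν1 i| := abs_sub _ _
      _ ≤ cA * N + N := add_le_add (hAbd i) (hN1 i)
      _ ≤ ((cA + 1) * cX + 1) * N * pX i := by
          linarith [h2, mul_nonneg hN0 (hpX i).le]
    · intro i
      rw [hx2 i, abs_div, abs_of_pos (hpY i), div_le_iff₀ (hpY i)]
      have h1 : (1:ℝ) ≤ cX * pY i := by
        have := hcXY i
        rw [div_le_iff₀ (hpY i)] at this
        linarith
      have h2 : (cA + 1) * N * 1 ≤ (cA + 1) * N * (cX * pY i) :=
        mul_le_mul_of_nonneg_left h1 (mul_nonneg (by linarith) hN0)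
      calc |A i - ν2 i| ≤ |A i| + |ν2 i| := abs_sub _ _
      _ ≤ cA * N + N := add_le_add (hAbd i) (hN2 i)
      _ ≤ ((cA + 1) * cX + 1) * N * pY i := by
          linarith [h2, mul_nonneg hN0 (hpY i).le]
    · intro y1 y2 hy1 hy2 hsy1 hsy2
      refine le_trans (ub_lemma pX pY hpX hpY J a' b' ha'0 hb'0 hfeas' heqJ'
        ν1 ν2 hv1 hv2 y1 y2 hy1 hy2 hsy1 hsy2) (le_of_eq ?_)
      have hRHS : ∑ i, min (pX i * x1 i + ν1 i) (pY i * x2 i + ν2 i) = W + z := by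
        rw [Finset.sum_congr rfl (fun i _ => by rw [hx1A i, hx2A i, min_self]),
          Finset.sum_congr rfl (fun i _ => by rw [hA' i]),
          Finset.sum_add_distrib, hsum_ind' (W / (J.card : ℝ)), sum_ite_id z k]
        rw [mul_div_assoc', mul_div_cancel_left₀ _ hr0.ne']
      rw [hRHS, hn1, hn2]
      have hSAe : SA = W + z * (pX j0 / pX k) := by rw [hWdef]; ring
      have hSBe : SB = W + z * (pY j0 / pY k) := by rw [hW2]; ring
      have hfin : a' * ((W + z * (pX j0 / pX k)) / pX j0)
          + b' * ((W + z * (pY j0 / pY k)) / pY j0)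
          = W * (a' / pX j0 + b' / pY j0) + z * (a' / pX k + b' / pY k) := by
        field_simp
        ring
      rw [hSAe, hSBe, hfin, heqJ' j0 hj0, hck]
      ring

end Part5

section Part6

variable {m : ℕ}

set_option maxHeartbeats 2000000 in
lemma core_lemma (pX pY : Fin m → ℝ) (hpX : ∀ i, 0 < pX i) (hpY : ∀ i, 0 < pY i)
    (J : Finset (Fin m)) (hJne : J.Nonempty)
    (α β : ℝ) (hα0 : 0 ≤ α) (hβ0 : 0 ≤ β)
    (hfeas : ∀ i, 1 ≤ α / pX i + β / pY i)
    (heqJ : ∀ i ∈ J, α / pX i + β / pY i = 1) :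
    ∃ K, 0 < K ∧ ∀ ν1 ν2 : Fin m → ℝ, (∀ i ∉ J, ν1 i = 0) → (∀ i ∉ J, ν2 i = 0) →
      ∃ x1 x2 : Fin m → ℝ,
        (∑ i, x1 i) = 0 ∧ (∑ i, x2 i) = 0 ∧ (∀ i ∉ J, 0 ≤ x1 i) ∧ (∀ i ∉ J, 0 ≤ x2 i) ∧
        (∀ i, |x1 i| ≤ K * (‖ν1‖ + ‖ν2‖)) ∧ (∀ i, |x2 i| ≤ K * (‖ν1‖ + ‖ν2‖)) ∧
        (∀ y1 y2 : Fin m → ℝ, (∑ i, y1 i) = 0 → (∑ i, y2 i) = 0 →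
          (∀ i ∉ J, 0 ≤ y1 i) → (∀ i ∉ J, 0 ≤ y2 i) →
          ∑ i, min (pX i * y1 i + ν1 i) (pY i * y2 i + ν2 i)
            ≤ ∑ i, min (pX i * x1 i + ν1 i) (pY i * x2 i + ν2 i)) := by
  classical
  obtain ⟨j0, hj0⟩ := hJne
  have hcXpos : (0:ℝ) < ∑ i, (1 / pX i + 1 / pY i) :=
    Finset.sum_pos (fun i _ => add_pos (div_pos one_pos (hpX i)) (div_pos one_pos (hpY i)))
      ⟨j0, Finset.mem_univ _⟩
  set cX : ℝ := ∑ i, (1 / pX i + 1 / pY i) with hcXdef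
  have hcXX : ∀ i, 1 / pX i ≤ cX := by
    intro i
    calc 1 / pX i ≤ 1 / pX i + 1 / pY i :=
          le_add_of_nonneg_right (le_of_lt (div_pos one_pos (hpY i)))
    _ ≤ ∑ i, (1 / pX i + 1 / pY i) :=
        Finset.single_le_sum (f := fun i => 1 / pX i + 1 / pY i)
          (fun i _ => le_of_lt (add_pos (div_pos one_pos (hpX i)) (div_pos one_pos (hpY i))))
          (Finset.mem_univ i)
  have hcXY : ∀ i, 1 / pY i ≤ cX := by
    intro i
    calc 1 / pY i ≤ 1 / pX i + 1 / pY i :=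
          le_add_of_nonneg_left (le_of_lt (div_pos one_pos (hpX i)))
    _ ≤ ∑ i, (1 / pX i + 1 / pY i) :=
        Finset.single_le_sum (f := fun i => 1 / pX i + 1 / pY i)
          (fun i _ => le_of_lt (add_pos (div_pos one_pos (hpX i)) (div_pos one_pos (hpY i))))
          (Finset.mem_univ i)
  by_cases hind : ∃ j ∈ J, ∃ k ∈ J, pX k * pY j ≠ pX j * pY k
  · -- independent pair in J
    obtain ⟨j, hj, k, hk, hne⟩ := hind
    have hjk : j ≠ k := by
      intro h
      exact hne (by rw [h])
    have hD2 : pX k * pY j - pX j * pY k ≠ 0 := sub_ne_zero.2 hne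
    set D2 : ℝ := pX k * pY j - pX j * pY k with hD2def
    have hej := heqJ j hj
    have hek := heqJ k hk
    -- constants
    set cn : ℝ := m * cX with hcndef
    have hcn0 : 0 ≤ cn := mul_nonneg (by positivity) hcXpos.le
    set cwj : ℝ := cn * (pX j * pX k * pY j + pY j * pY k * pX j) / |D2| with hcwjdef
    set cwk : ℝ := cn * (pY j * pY k * pX k + pX j * pX k * pY k) / |D2| with hcwkdef
    have habs : 0 < |D2| := abs_pos.2 hD2
    have hcwj0 : 0 ≤ cwj := by
      rw [hcwjdef]
      have h1 : (0:ℝ) ≤ pX j * pX k * pY j + pY j * pY k * pX j := by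
        have := hpX j; have := hpX k; have := hpY j; have := hpY k
        positivity
      exact div_nonneg (mul_nonneg hcn0 h1) habs.le
    have hcwk0 : 0 ≤ cwk := by
      rw [hcwkdef]
      have h1 : (0:ℝ) ≤ pY j * pY k * pX k + pX j * pX k * pY k := by
        have := hpX j; have := hpX k; have := hpY j; have := hpY k
        positivity
      exact div_nonneg (mul_nonneg hcn0 h1) habs.le
    refine ⟨(cwj + cwk + 1) * cX + 1,
      add_pos_of_nonneg_of_pos (mul_nonneg (by linarith) hcXpos.le) one_pos, ?_⟩
    intro ν1 ν2 hv1 hv2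
    set N : ℝ := ‖ν1‖ + ‖ν2‖ with hNdef
    have hN0 : 0 ≤ N := add_nonneg (norm_nonneg _) (norm_nonneg _)
    have hN1 : ∀ i, |ν1 i| ≤ N := by
      intro i
      calc |ν1 i| = ‖ν1 i‖ := (Real.norm_eq_abs _).symm
      _ ≤ ‖ν1‖ := norm_le_pi_norm ν1 i
      _ ≤ N := le_add_of_nonneg_right (norm_nonneg _)
    have hN2 : ∀ i, |ν2 i| ≤ N := by
      intro i
      calc |ν2 i| = ‖ν2 i‖ := (Real.norm_eq_abs _).symm
      _ ≤ ‖ν2‖ := norm_le_pi_norm ν2 i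
      _ ≤ N := le_add_of_nonneg_left (norm_nonneg _)
    set n1 : ℝ := ∑ i, ν1 i / pX i with hn1def
    set n2 : ℝ := ∑ i, ν2 i / pY i with hn2def
    have hn1bd : |n1| ≤ cn * N := by
      rw [hn1def, hcndef]
      calc |∑ i, ν1 i / pX i| ≤ ∑ i, |ν1 i / pX i| := Finset.abs_sum_le_sum_abs _ _
      _ ≤ ∑ _i : Fin m, cX * N := by
          refine Finset.sum_le_sum fun i _ => ?_
          rw [abs_div, abs_of_pos (hpX i)]
          rw [div_le_iff₀ (hpX i)]
          calc |ν1 i| ≤ N := hN1 i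
          _ = 1 * N := (one_mul _).symm
          _ ≤ cX * pX i * N := by
              have h1 : (1:ℝ) ≤ cX * pX i := by
                have := hcXX i
                rw [div_le_iff₀ (hpX i)] at this
                linarith
              exact mul_le_mul_of_nonneg_right h1 hN0
          _ = cX * N * pX i := by ring
      _ = m * (cX * N) := by
          rw [Finset.sum_const, Finset.card_univ, Fintype.card_fin, nsmul_eq_mul]
      _ = m * cX * N := by ring
    have hn2bd : |n2| ≤ cn * N := by
      rw [hn2def, hcndef]
      calc |∑ i, ν2 i / pY i| ≤ ∑ i, |ν2 i / pY i| := Finset.abs_sum_le_sum_abs _ _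
      _ ≤ ∑ _i : Fin m, cX * N := by
          refine Finset.sum_le_sum fun i _ => ?_
          rw [abs_div, abs_of_pos (hpY i)]
          rw [div_le_iff₀ (hpY i)]
          calc |ν2 i| ≤ N := hN2 i
          _ = 1 * N := (one_mul _).symm
          _ ≤ cX * pY i * N := by
              have h1 : (1:ℝ) ≤ cX * pY i := by
                have := hcXY i
                rw [div_le_iff₀ (hpY i)] at this
                linarith
              exact mul_le_mul_of_nonneg_right h1 hN0
          _ = cX * N * pY i := by ring
      _ = m * (cX * N) := by
          rw [Finset.sum_const, Finset.card_univ, Fintype.card_fin, nsmul_eq_mul]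
      _ = m * cX * N := by ring
    set wj : ℝ := (n1 * (pX j * pX k) * pY j - n2 * (pY j * pY k) * pX j) / D2 with hwjdef
    set wk : ℝ := (n2 * (pY j * pY k) * pX k - n1 * (pX j * pX k) * pY k) / D2 with hwkdef
    have hsolve1 : wj / pX j + wk / pX k = n1 := by
      rw [hwjdef, hwkdef, hD2def]
      field_simp [(hpX j).ne', (hpX k).ne', (hpY j).ne', (hpY k).ne']
      ring
    have hsolve2 : wj / pY j + wk / pY k = n2 := by
      rw [hwjdef, hwkdef, hD2def]
      field_simp [(hpX j).ne', (hpX k).ne', (hpY j).ne', (hpY k).ne']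
      ring
    have hwjbd : |wj| ≤ cwj * N := by
      rw [hwjdef, hcwjdef, abs_div, div_mul_eq_mul_div]
      rw [div_le_div_iff₀ habs habs]
      calc |n1 * (pX j * pX k) * pY j - n2 * (pY j * pY k) * pX j| * |D2|
          ≤ (|n1| * (pX j * pX k * pY j) + |n2| * (pY j * pY k * pX j)) * |D2| := by
            refine mul_le_mul_of_nonneg_right ?_ habs.le
            refine le_trans (abs_sub _ _) ?_
            have e1 : |n1 * (pX j * pX k) * pY j| = |n1| * (pX j * pX k * pY j) := by
              rw [abs_mul, abs_mul, abs_of_pos (mul_pos (hpX j) (hpX k)), abs_of_pos (hpY j)]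
              ring
            have e2 : |n2 * (pY j * pY k) * pX j| = |n2| * (pY j * pY k * pX j) := by
              rw [abs_mul, abs_mul, abs_of_pos (mul_pos (hpY j) (hpY k)), abs_of_pos (hpX j)]
              ring
            rw [e1, e2]
      _ ≤ (cn * N * (pX j * pX k * pY j) + cn * N * (pY j * pY k * pX j)) * |D2| := by
            refine mul_le_mul_of_nonneg_right (add_le_add ?_ ?_) habs.le
            · exact mul_le_mul_of_nonneg_right hn1bd
                (by have := hpX j; have := hpX k; have := hpY j; positivity)
            · exact mul_le_mul_of_nonneg_right hn2bd
                (by have := hpX j; have := hpY j; have := hpY k; positivity)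
      _ = cn * (pX j * pX k * pY j + pY j * pY k * pX j) * N * |D2| := by ring
    have hwkbd : |wk| ≤ cwk * N := by
      rw [hwkdef, hcwkdef, abs_div, div_mul_eq_mul_div]
      rw [div_le_div_iff₀ habs habs]
      calc |n2 * (pY j * pY k) * pX k - n1 * (pX j * pX k) * pY k| * |D2|
          ≤ (|n2| * (pY j * pY k * pX k) + |n1| * (pX j * pX k * pY k)) * |D2| := by
            refine mul_le_mul_of_nonneg_right ?_ habs.le
            refine le_trans (abs_sub _ _) ?_
            have e1 : |n2 * (pY j * pY k) * pX k| = |n2| * (pY j * pY k * pX k) := by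
              rw [abs_mul, abs_mul, abs_of_pos (mul_pos (hpY j) (hpY k)), abs_of_pos (hpX k)]
              ring
            have e2 : |n1 * (pX j * pX k) * pY k| = |n1| * (pX j * pX k * pY k) := by
              rw [abs_mul, abs_mul, abs_of_pos (mul_pos (hpX j) (hpX k)), abs_of_pos (hpY k)]
              ring
            rw [e1, e2]
      _ ≤ (cn * N * (pY j * pY k * pX k) + cn * N * (pX j * pX k * pY k)) * |D2| := by
            refine mul_le_mul_of_nonneg_right (add_le_add ?_ ?_) habs.le
            · exact mul_le_mul_of_nonneg_right hn2bd
                (by have := hpY j; have := hpY k; have := hpX k; positivity)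
            · exact mul_le_mul_of_nonneg_right hn1bd
                (by have := hpX j; have := hpX k; have := hpY k; positivity)
      _ = cn * (pY j * pY k * pX k + pX j * pX k * pY k) * N * |D2| := by ring
    obtain ⟨w, hw⟩ : ∃ w : Fin m → ℝ,
        ∀ i, w i = (if i = j then wj else 0) + (if i = k then wk else 0) := ⟨_, fun _ => rfl⟩
    obtain ⟨x1, hx1⟩ : ∃ x1 : Fin m → ℝ, ∀ i, x1 i = (w i - ν1 i) / pX i := ⟨_, fun _ => rfl⟩
    obtain ⟨x2, hx2⟩ : ∃ x2 : Fin m → ℝ, ∀ i, x2 i = (w i - ν2 i) / pY i := ⟨_, fun _ => rfl⟩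
    have hwbd : ∀ i, |w i| ≤ (cwj + cwk) * N := by
      intro i
      rw [hw i]
      calc |(if i = j then wj else 0) + (if i = k then wk else 0)|
          ≤ |if i = j then wj else 0| + |if i = k then wk else 0| := abs_add_le _ _
      _ ≤ cwj * N + cwk * N := by
          refine add_le_add ?_ ?_
          · split_ifs
            · exact hwjbd
            · rw [abs_zero]; exact mul_nonneg hcwj0 hN0
          · split_ifs
            · exact hwkbd
            · rw [abs_zero]; exact mul_nonneg hcwk0 hN0
      _ = (cwj + cwk) * N := by ring
    have hsumwX : ∑ i, w i / pX i = n1 := by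
      rw [Finset.sum_congr rfl (fun i _ => by rw [hw i]),
        Finset.sum_congr rfl (fun i _ => add_div _ _ (pX i)), Finset.sum_add_distrib,
        sum_ite_div wj j pX, sum_ite_div wk k pX]
      exact hsolve1
    have hsumwY : ∑ i, w i / pY i = n2 := by
      rw [Finset.sum_congr rfl (fun i _ => by rw [hw i]),
        Finset.sum_congr rfl (fun i _ => add_div _ _ (pY i)), Finset.sum_add_distrib,
        sum_ite_div wj j pY, sum_ite_div wk k pY]
      exact hsolve2
    have hx1w : ∀ i, pX i * x1 i + ν1 i = w i := by
      intro i
      rw [hx1 i, mul_comm, div_mul_cancel₀ _ (hpX i).ne']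
      ring
    have hx2w : ∀ i, pY i * x2 i + ν2 i = w i := by
      intro i
      rw [hx2 i, mul_comm, div_mul_cancel₀ _ (hpY i).ne']
      ring
    refine ⟨x1, x2, ?_, ?_, ?_, ?_, ?_, ?_, ?_⟩
    · rw [Finset.sum_congr rfl (fun i _ => hx1 i),
        Finset.sum_congr rfl (fun i _ => sub_div (w i) (ν1 i) (pX i)),
        Finset.sum_sub_distrib, hsumwX, ← hn1def]
      ring
    · rw [Finset.sum_congr rfl (fun i _ => hx2 i),
        Finset.sum_congr rfl (fun i _ => sub_div (w i) (ν2 i) (pY i)),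
        Finset.sum_sub_distrib, hsumwY, ← hn2def]
      ring
    · intro i hi
      have h1 : i ≠ j := fun h => hi (h ▸ hj)
      have h2 : i ≠ k := fun h => hi (h ▸ hk)
      rw [hx1 i, hw i, if_neg h1, if_neg h2, hv1 i hi]
      simp
    · intro i hi
      have h1 : i ≠ j := fun h => hi (h ▸ hj)
      have h2 : i ≠ k := fun h => hi (h ▸ hk)
      rw [hx2 i, hw i, if_neg h1, if_neg h2, hv2 i hi]
      simp
    · intro i
      rw [hx1 i, abs_div, abs_of_pos (hpX i), div_le_iff₀ (hpX i)]
      have h1 : (1:ℝ) ≤ cX * pX i := by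
        have := hcXX i
        rw [div_le_iff₀ (hpX i)] at this
        linarith
      have h2 : (cwj + cwk + 1) * N * 1 ≤ (cwj + cwk + 1) * N * (cX * pX i) :=
        mul_le_mul_of_nonneg_left h1 (mul_nonneg (by linarith) hN0)
      calc |w i - ν1 i| ≤ |w i| + |ν1 i| := abs_sub _ _
      _ ≤ (cwj + cwk) * N + N := add_le_add (hwbd i) (hN1 i)
      _ ≤ ((cwj + cwk + 1) * cX + 1) * N * pX i := by
          linarith [h2, mul_nonneg hN0 (hpX i).le]
    · intro i
      rw [hx2 i, abs_div, abs_of_pos (hpY i), div_le_iff₀ (hpY i)]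
      have h1 : (1:ℝ) ≤ cX * pY i := by
        have := hcXY i
        rw [div_le_iff₀ (hpY i)] at this
        linarith
      have h2 : (cwj + cwk + 1) * N * 1 ≤ (cwj + cwk + 1) * N * (cX * pY i) :=
        mul_le_mul_of_nonneg_left h1 (mul_nonneg (by linarith) hN0)
      calc |w i - ν2 i| ≤ |w i| + |ν2 i| := abs_sub _ _
      _ ≤ (cwj + cwk) * N + N := add_le_add (hwbd i) (hN2 i)
      _ ≤ ((cwj + cwk + 1) * cX + 1) * N * pY i := by
          linarith [h2, mul_nonneg hN0 (hpY i).le]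
    · intro y1 y2 hy1 hy2 hsy1 hsy2
      refine le_trans (ub_lemma pX pY hpX hpY J α β hα0 hβ0 hfeas heqJ
        ν1 ν2 hv1 hv2 y1 y2 hy1 hy2 hsy1 hsy2) (le_of_eq ?_)
      have hRHS : ∑ i, min (pX i * x1 i + ν1 i) (pY i * x2 i + ν2 i) = wj + wk := by
        rw [Finset.sum_congr rfl (fun i _ => by rw [hx1w i, hx2w i, min_self]),
          Finset.sum_congr rfl (fun i _ => by rw [hw i]),
          Finset.sum_add_distrib, sum_ite_id wj j, sum_ite_id wk k]
      rw [hRHS, ← hn1def, ← hn2def]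
      linear_combination wj * hej + wk * hek - α * hsolve1 - β * hsolve2
  · -- all pairs proportional : pX, pY constant on J
    push_neg at hind
    have hconst : ∀ i ∈ J, pX i = pX j0 ∧ pY i = pY j0 := by
      intro i hi
      have hρ : pX j0 * pY i = pX i * pY j0 := hind i hi j0 hj0
      have hYi : pY i = pX i * pY j0 / pX j0 := by
        rw [eq_div_iff (hpX j0).ne']
        linarith [hρ]
      have hXi : pX i = pX j0 := by
        have h1 := heqJ i hi
        have h2 := heqJ j0 hj0
        have h3 : α / pX i + β / pY i = pX j0 / pX i * (α / pX j0 + β / pY j0) := by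
          rw [hYi]
          field_simp [(hpX i).ne', (hpX j0).ne', (hpY j0).ne']
        rw [h1, h2, mul_one] at h3
        have h3' := h3.symm
        rw [div_eq_one_iff_eq (hpX i).ne'] at h3'
        exact h3'.symm
      refine ⟨hXi, ?_⟩
      rw [hYi, hXi]
      exact mul_div_cancel_left₀ _ (hpX j0).ne'
    have hcX' : ∀ i ∈ J, pX i = pX j0 := fun i hi => (hconst i hi).1
    have hcY' : ∀ i ∈ J, pY i = pY j0 := fun i hi => (hconst i hi).2
    obtain ⟨K1, hK1, H1⟩ := case2half pX pY hpX hpY J j0 hj0 hcX' hcY' α β hα0 hβ0 hfeas heqJ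
    obtain ⟨K2, hK2, H2⟩ := case2half pY pX hpY hpX J j0 hj0 hcY' hcX' β α hβ0 hα0
      (fun i => by rw [add_comm]; exact hfeas i)
      (fun i hi => by rw [add_comm]; exact heqJ i hi)
    refine ⟨max K1 K2, lt_max_of_lt_left hK1, ?_⟩
    intro ν1 ν2 hv1 hv2
    have hNsymm : ‖ν2‖ + ‖ν1‖ = ‖ν1‖ + ‖ν2‖ := add_comm _ _
    have hmaxmul : ∀ (Ki : ℝ) (c : ℝ), Ki ≤ max K1 K2 → 0 ≤ c → Ki * c ≤ max K1 K2 * c :=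
      fun Ki c h hc => mul_le_mul_of_nonneg_right h hc
    have hc0 : 0 ≤ ‖ν1‖ + ‖ν2‖ := add_nonneg (norm_nonneg _) (norm_nonneg _)
    rcases le_total (∑ i, ν1 i) (∑ i, ν2 i) with hc | hc
    · obtain ⟨x1, x2, h1, h2, h3, h4, h5, h6, h7⟩ := H1 ν1 ν2 hv1 hv2 hc
      refine ⟨x1, x2, h1, h2, h3, h4, ?_, ?_, h7⟩
      · exact fun i => le_trans (h5 i) (hmaxmul K1 _ (le_max_left _ _) hc0)
      · exact fun i => le_trans (h6 i) (hmaxmul K1 _ (le_max_left _ _) hc0)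
    · obtain ⟨x1', x2', h1, h2, h3, h4, h5, h6, h7⟩ := H2 ν2 ν1 hv2 hv1 hc
      refine ⟨x2', x1', h2, h1, h4, h3, ?_, ?_, ?_⟩
      · intro i
        refine le_trans (h6 i) ?_
        rw [hNsymm]
        exact hmaxmul K2 _ (le_max_right _ _) hc0
      · intro i
        refine le_trans (h5 i) ?_
        rw [hNsymm]
        exact hmaxmul K2 _ (le_max_right _ _) hc0
      · intro y1 y2 hy1 hy2 hsy1 hsy2
        have h8 := h7 y2 y1 hy2 hy1 hsy2 hsy1
        calc ∑ i, min (pX i * y1 i + ν1 i) (pY i * y2 i + ν2 i)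
            = ∑ i, min (pY i * y2 i + ν2 i) (pX i * y1 i + ν1 i) :=
              Finset.sum_congr rfl fun i _ => min_comm _ _
        _ ≤ ∑ i, min (pY i * x1' i + ν2 i) (pX i * x2' i + ν1 i) := h8
        _ = ∑ i, min (pX i * x2' i + ν1 i) (pY i * x1' i + ν2 i) :=
              Finset.sum_congr rfl fun i _ => min_comm _ _

end Part6

/-- **Lemma 1.4, first part**: in Case b), for every `ν` vanishing outside `I` the supremum
defining `𝔪(ν)` is attained, and it is already attained on the ball `‖x‖_∞ ≤ 2Cm‖ν‖_∞`
for some constant `C > 0` depending only on `p^X` and `p^Y`. -/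
theorem mfrak_well_defined_and_local
    (m : ℕ) (hm : 2 ≤ m)
    (pX pY : Fin m → ℝ)
    (hpX : ∀ i, 0 < pX i) (hpY : ∀ i, 0 < pY i)
    (hpXsum : ∑ i, pX i = 1) (hpYsum : ∑ i, pY i = 1)
    (hCaseB : CaseB pX pY) :
    ∃ C : ℝ, 0 < C ∧
      ∀ ν : (Fin m → ℝ) × (Fin m → ℝ),
        (∀ i ∉ Iset pX pY, ν.1 i = 0 ∧ ν.2 i = 0) →
        (∃ x ∈ E'set pX pY ×ˢ E'set pX pY,
          (∑ i, min (pX i * x.1 i + ν.1 i) (pY i * x.2 i + ν.2 i)) = mfrak pX pY ν) ∧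
        mfrak pX pY ν =
          sSup ((fun x : (Fin m → ℝ) × (Fin m → ℝ) =>
              ∑ i, min (pX i * x.1 i + ν.1 i) (pY i * x.2 i + ν.2 i)) ''
            {x ∈ E'set pX pY ×ˢ E'set pX pY | ‖x‖ ≤ 2 * C * m * ‖ν‖}) := by
  classical
  have hm0 : 0 < m := lt_of_lt_of_le two_pos hm
  obtain ⟨us, husLU, huspos, hIne⟩ := exists_ustar hm0 hpX hpY
  obtain ⟨α, β, hα0, hβ0, hfeas, heqI⟩ := exists_dual hm0 hpX hpY hCaseB
  set J : Finset (Fin m) := Finset.univ.filter (· ∈ Iset pX pY) with hJdef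
  have hmemJ : ∀ i, i ∈ J ↔ i ∈ Iset pX pY := by
    intro i
    rw [hJdef]
    simp
  have hJne : J.Nonempty := by
    obtain ⟨i, hi⟩ := hIne
    exact ⟨i, (hmemJ i).2 hi⟩
  have heqJ : ∀ i ∈ J, α / pX i + β / pY i = 1 := fun i hi => heqI i ((hmemJ i).1 hi)
  obtain ⟨K, hK, HH⟩ := core_lemma pX pY hpX hpY J hJne α β hα0 hβ0 hfeas heqJ
  refine ⟨K, hK, ?_⟩
  intro ν hν
  have hv1 : ∀ i ∉ J, ν.1 i = 0 := fun i hi => (hν i (fun h => hi ((hmemJ i).2 h))).1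
  have hv2 : ∀ i ∉ J, ν.2 i = 0 := fun i hi => (hν i (fun h => hi ((hmemJ i).2 h))).2
  obtain ⟨x1, x2, h1, h2, h3, h4, h5, h6, h7⟩ := HH ν.1 ν.2 hv1 hv2
  have hxE1 : x1 ∈ E'set pX pY := ⟨h1, fun i hi => h3 i (fun hJ' => hi ((hmemJ i).1 hJ'))⟩
  have hxE2 : x2 ∈ E'set pX pY := ⟨h2, fun i hi => h4 i (fun hJ' => hi ((hmemJ i).1 hJ'))⟩
  have hxprod : ((x1, x2) : (Fin m → ℝ) × (Fin m → ℝ)) ∈ E'set pX pY ×ˢ E'set pX pY :=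
    Set.mem_prod.2 ⟨hxE1, hxE2⟩
  set val : ℝ := ∑ i, min (pX i * x1 i + ν.1 i) (pY i * x2 i + ν.2 i) with hvaldef
  have hub : ∀ w ∈ ((fun x : (Fin m → ℝ) × (Fin m → ℝ) =>
      ∑ i, min (pX i * x.1 i + ν.1 i) (pY i * x.2 i + ν.2 i)) ''
      (E'set pX pY ×ˢ E'set pX pY)), w ≤ val := by
    rintro w ⟨y, hy, rfl⟩
    obtain ⟨hy1, hy2⟩ := Set.mem_prod.1 hy
    exact h7 y.1 y.2 hy1.1 hy2.1
      (fun i hi => hy1.2 i (fun h => hi ((hmemJ i).2 h)))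
      (fun i hi => hy2.2 i (fun h => hi ((hmemJ i).2 h)))
  have hgt : IsGreatest ((fun x : (Fin m → ℝ) × (Fin m → ℝ) =>
      ∑ i, min (pX i * x.1 i + ν.1 i) (pY i * x.2 i + ν.2 i)) ''
      (E'set pX pY ×ˢ E'set pX pY)) val :=
    ⟨⟨(x1, x2), hxprod, rfl⟩, hub⟩
  have hmf : mfrak pX pY ν = val := hgt.csSup_eq
  -- norm bound
  have hc0 : (0:ℝ) ≤ ‖ν.1‖ + ‖ν.2‖ := add_nonneg (norm_nonneg _) (norm_nonneg _)
  have hb1 : ‖x1‖ ≤ K * (‖ν.1‖ + ‖ν.2‖) := by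
    refine (pi_norm_le_iff_of_nonneg (mul_nonneg hK.le hc0)).2 ?_
    intro i
    rw [Real.norm_eq_abs]
    exact h5 i
  have hb2 : ‖x2‖ ≤ K * (‖ν.1‖ + ‖ν.2‖) := by
    refine (pi_norm_le_iff_of_nonneg (mul_nonneg hK.le hc0)).2 ?_
    intro i
    rw [Real.norm_eq_abs]
    exact h6 i
  have hsum2 : ‖ν.1‖ + ‖ν.2‖ ≤ 2 * ‖ν‖ := by
    have hf := norm_fst_le ν
    have hs := norm_snd_le ν
    linarith
  have hm1R : (1:ℝ) ≤ (m:ℝ) := by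
    have : (2:ℝ) ≤ (m:ℝ) := by exact_mod_cast hm
    linarith
  have hnormx : ‖((x1, x2) : (Fin m → ℝ) × (Fin m → ℝ))‖ ≤ 2 * K * m * ‖ν‖ := by
    rw [Prod.norm_def]
    have hchain : K * (‖ν.1‖ + ‖ν.2‖) ≤ 2 * K * m * ‖ν‖ := by
      calc K * (‖ν.1‖ + ‖ν.2‖) ≤ K * (2 * ‖ν‖) := mul_le_mul_of_nonneg_left hsum2 hK.le
      _ = 2 * K * ‖ν‖ := by ring
      _ ≤ 2 * K * m * ‖ν‖ := by
          have h9 : (0:ℝ) ≤ K * ‖ν‖ * ((m:ℝ) - 1) :=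
            mul_nonneg (mul_nonneg hK.le (norm_nonneg ν)) (by linarith)
          linarith [h9]
    exact max_le (le_trans hb1 hchain) (le_trans hb2 hchain)
  have hxmem2 : ((x1, x2) : (Fin m → ℝ) × (Fin m → ℝ)) ∈
      {x ∈ E'set pX pY ×ˢ E'set pX pY | ‖x‖ ≤ 2 * K * m * ‖ν‖} := ⟨hxprod, hnormx⟩
  have hgt2 : IsGreatest ((fun x : (Fin m → ℝ) × (Fin m → ℝ) =>
      ∑ i, min (pX i * x.1 i + ν.1 i) (pY i * x.2 i + ν.2 i)) ''
      {x ∈ E'set pX pY ×ˢ E'set pX pY | ‖x‖ ≤ 2 * K * m * ‖ν‖}) val := by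
    refine ⟨⟨(x1, x2), hxmem2, rfl⟩, ?_⟩
    rintro w ⟨y, hy, rfl⟩
    exact hub _ ⟨y, hy.1, rfl⟩
  exact ⟨⟨(x1, x2), hxprod, hmf.symm⟩, by rw [hmf, hgt2.csSup_eq]⟩


end
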